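/- arXiv:math/9906071 — 2 statements merged into one kernel-verified Lean document; each statement's English description precedes it below -/
import Mathlib

section
/- Let W be a finite Weyl group with Bruhat order ≤ and length ℓ. For any u < w with ℓ(w) = ℓ(u) + 2, the number of elements v with u < v < w is exactly 2. -/
/-!
STATEMENT 6: Let `W` be a finite Weyl group (finite Coxeter group) with Bruhat order
`≤` and length function `ℓ`.  For any `u < w` with `ℓ(w) = ℓ(u) + 2`, the number of
elements `v` with `u < v < w` is exactly `2` (the "diamond" property).

The Bruhat order is defined by the subword property: `u ≤ w` iff some reduced word
for `w` has a sublist whose product is `u`.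
-/

/-- The Bruhat order on a Coxeter group, via the subword property. -/
def CoxeterSystem.BruhatLE {B W : Type*} [Group W] {M : CoxeterMatrix B}
    (cs : CoxeterSystem M W) (u w : W) : Prop :=
  ∃ ω : List B, cs.IsReduced ω ∧ cs.wordProd ω = w ∧
    ∃ ω' : List B, ω'.Sublist ω ∧ cs.wordProd ω' = u

/-- The strict Bruhat order. -/
def CoxeterSystem.BruhatLT {B W : Type*} [Group W] {M : CoxeterMatrix B}
    (cs : CoxeterSystem M W) (u w : W) : Prop :=
  cs.BruhatLE u w ∧ u ≠ w

set_option linter.unusedSectionVars false in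
section
namespace BruhatDiamond

open CoxeterSystem List

open scoped Classical

/-- auxiliary pure group lemma -/
lemma pow_comm_of {G : Type*} [Group G] {g x : G} (h : x * g = g⁻¹ * x) (m : ℕ) :
    x * g ^ m = (g ^ m)⁻¹ * x := by
  induction m with
  | zero => simp
  | succ m ih =>
    rw [pow_succ, ← mul_assoc, ih, mul_assoc, h, ← mul_assoc, mul_inv_rev]
    congr 1
    group

lemma conj_eq_iff {G : Type*} [Group G] (g x y : G) : g * x * g⁻¹ = y ↔ x = g⁻¹ * y * g := by
  constructor
  · rintro rfl; group
  · rintro rfl; group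

variable {B W : Type*} [Group W] {M : CoxeterMatrix B} (cs : CoxeterSystem M W)

local prefix:100 "s" => cs.simple
local prefix:100 "π" => cs.wordProd
local prefix:100 "ℓ" => cs.length
local prefix:100 "ris" => cs.rightInvSeq

/-! ### The sign representation and the strong exchange property -/

/-- Underlying function of the sign permutation attached to a simple generator. -/
noncomputable def etaFun (i : B) : W × ℤˣ → W × ℤˣ :=
  fun p => (s i * p.1 * s i, if p.1 = s i then -p.2 else p.2)

lemma simple_conj_eq_simple_iff (i : B) (t : W) :
    s i * t * s i = s i ↔ t = s i := by
  constructor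
  · intro h
    have h2 : s i * (s i * t * s i) * s i = s i * s i * s i := by rw [h]
    rw [show s i * (s i * t * s i) * s i = (s i * s i) * t * (s i * s i) by group,
      cs.simple_mul_simple_self, one_mul, mul_one] at h2
    simpa using h2
  · rintro rfl
    rw [cs.simple_mul_simple_self, one_mul]

lemma etaFun_involutive (i : B) : Function.Involutive (etaFun cs i) := by
  rintro ⟨t, ε⟩
  simp only [etaFun]
  congr 1
  · rw [show s i * (s i * t * s i) * s i = (s i * s i) * t * (s i * s i) by group,
      cs.simple_mul_simple_self, one_mul, mul_one]
  · simp only [simple_conj_eq_simple_iff cs i t]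
    split_ifs with h
    · simp
    · rfl

/-- The sign permutation attached to a simple generator. -/
noncomputable def etaPerm (i : B) : Equiv.Perm (W × ℤˣ) := (etaFun_involutive cs i).toPerm

lemma etaPerm_apply (i : B) (t : W) (ε : ℤˣ) :
    etaPerm cs i (t, ε) = (s i * t * s i, if t = s i then -ε else ε) := rfl

lemma simple_key (i i' : B) : s i' * (s i * s i') = (s i * s i')⁻¹ * s i' := by
  rw [mul_inv_rev, cs.inv_simple, cs.inv_simple]
  group

lemma simple_comm_pow (i i' : B) (m : ℕ) :
    s i' * (s i * s i') ^ m = ((s i * s i') ^ m)⁻¹ * s i' :=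
  pow_comm_of (simple_key cs i i') m

lemma etaPerm_mul_apply (i i' : B) (t : W) (ε : ℤˣ) :
    (etaPerm cs i * etaPerm cs i') (t, ε) =
      ((s i * s i') * t * (s i * s i')⁻¹,
        ε * (if t = s i' then (-1 : ℤˣ) else 1)
          * (if t = (s i * s i')⁻¹ * s i' then (-1 : ℤˣ) else 1)) := by
  rw [Equiv.Perm.mul_apply, etaPerm_apply, etaPerm_apply]
  have hcond : s i' * t * s i' = s i ↔ t = (s i * s i')⁻¹ * s i' := by
    rw [show s i' * t * s i' = s i' * t * (s i')⁻¹ by rw [cs.inv_simple],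
      conj_eq_iff, cs.inv_simple, mul_inv_rev, cs.inv_simple, cs.inv_simple]
  rw [Prod.ext_iff]
  constructor
  · show s i * (s i' * t * s i') * s i = _
    rw [mul_inv_rev, cs.inv_simple, cs.inv_simple]
    group
  · show (if s i' * t * s i' = s i then _ else _) = _
    rw [hcond]
    split_ifs with h1 h2 h2 <;> simp [mul_neg, neg_mul, neg_neg, mul_comm, mul_assoc, mul_left_comm]

lemma etaPerm_mul_pow_apply (i i' : B) (m : ℕ) (t : W) (ε : ℤˣ) :
    ((etaPerm cs i * etaPerm cs i') ^ m) (t, ε) =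
      ((s i * s i') ^ m * t * ((s i * s i') ^ m)⁻¹,
        ε * ∏ j ∈ Finset.range (2 * m),
          (if t = ((s i * s i') ^ j)⁻¹ * s i' then (-1 : ℤˣ) else 1)) := by
  induction m with
  | zero => simp
  | succ m ih =>
    rw [pow_succ', Equiv.Perm.mul_apply, ih, etaPerm_mul_apply]
    set p := s i * s i' with hp
    have e1 : (p ^ m)⁻¹ * s i' * p ^ m = (p ^ (2 * m))⁻¹ * s i' := by
      rw [mul_assoc, simple_comm_pow cs i i', ← mul_assoc, ← mul_inv_rev, ← pow_add, two_mul]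
    have e2 : (p ^ m)⁻¹ * p⁻¹ * s i' * p ^ m = (p ^ (2 * m + 1))⁻¹ * s i' := by
      rw [mul_assoc ((p ^ m)⁻¹ * p⁻¹), simple_comm_pow cs i i', ← mul_assoc,
        ← mul_inv_rev, ← mul_inv_rev]
      congr 2
      rw [← pow_succ', ← pow_add]
      congr 1
      omega
    have c1 : p ^ m * t * (p ^ m)⁻¹ = s i' ↔ t = (p ^ (2 * m))⁻¹ * s i' := by
      rw [conj_eq_iff, e1]
    have c2 : p ^ m * t * (p ^ m)⁻¹ = p⁻¹ * s i' ↔ t = (p ^ (2 * m + 1))⁻¹ * s i' := by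
      rw [conj_eq_iff, ← mul_assoc, e2]
    rw [Prod.ext_iff]
    constructor
    · show p * (p ^ m * t * (p ^ m)⁻¹) * p⁻¹ = _
      rw [pow_succ']
      group
    · show _ * (if p ^ m * t * (p ^ m)⁻¹ = s i' then _ else _) * _ = _
      rw [c1, c2, show 2 * (m + 1) = (2 * m) + 1 + 1 by ring, Finset.prod_range_succ,
        Finset.prod_range_succ]
      simp [mul_neg, neg_mul, neg_neg, mul_comm, mul_assoc, mul_left_comm]

lemma etaPerm_liftable : M.IsLiftable (etaPerm cs) := by
  intro i i'
  apply Equiv.ext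
  rintro ⟨t, ε⟩
  rw [etaPerm_mul_pow_apply, Equiv.Perm.one_apply, Prod.ext_iff]
  constructor
  · rw [cs.simple_mul_simple_pow]; simp
  · show ε * _ = ε
    rw [show 2 * M i i' = M i i' + M i i' by ring, Finset.prod_range_add]
    have hq : ∀ j, ((s i * s i') ^ (M i i' + j))⁻¹ * s i' = ((s i * s i') ^ j)⁻¹ * s i' := by
      intro j
      rw [pow_add, cs.simple_mul_simple_pow, one_mul]
    simp only [hq]
    rw [Int.units_mul_self, mul_one]

/-- The sign representation `W →* Perm (W × ℤˣ)`. -/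
noncomputable def eta : W →* Equiv.Perm (W × ℤˣ) := cs.lift ⟨etaPerm cs, etaPerm_liftable cs⟩

lemma eta_simple (i : B) : eta cs (s i) = etaPerm cs i :=
  cs.lift_apply_simple (etaPerm_liftable cs) i

/-- Sign of `t` with respect to a list of elements. -/
noncomputable def signAt (t : W) (l : List W) : ℤˣ :=
  (l.map (fun r => if t = r then (-1 : ℤˣ) else 1)).prod

@[simp] lemma signAt_nil (t : W) : signAt t ([] : List W) = 1 := rfl

lemma signAt_cons (t r : W) (l : List W) :
    signAt t (r :: l) = (if t = r then (-1 : ℤˣ) else 1) * signAt t l := by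
  simp [signAt]

lemma mem_of_signAt_ne_one {t : W} {l : List W} (h : signAt t l ≠ 1) : t ∈ l := by
  induction l with
  | nil => simp at h
  | cons r l ih =>
    rw [signAt_cons] at h
    by_cases hr : t = r
    · exact hr ▸ mem_cons_self (a := r) (l := l)
    · rw [if_neg hr, one_mul] at h
      exact mem_cons_of_mem r (ih h)

lemma eta_wordProd (ω : List B) (t : W) (ε : ℤˣ) :
    eta cs (π ω) (t, ε) = (π ω * t * (π ω)⁻¹, ε * signAt t (ris ω)) := by
  induction ω with
  | nil => simp [signAt]
  | cons i ω ih =>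
    have hris : ris (i :: ω) = ((π ω)⁻¹ * s i * π ω) :: ris ω := rfl
    rw [cs.wordProd_cons, map_mul, Equiv.Perm.mul_apply, ih, eta_simple, etaPerm_apply,
      hris, signAt_cons]
    have hcond : π ω * t * (π ω)⁻¹ = s i ↔ t = (π ω)⁻¹ * s i * π ω :=
      conj_eq_iff _ _ _
    rw [Prod.ext_iff]
    constructor
    · show s i * (π ω * t * (π ω)⁻¹) * s i = (s i * π ω) * t * (s i * π ω)⁻¹
      rw [mul_inv_rev, cs.inv_simple]
      group
    · show (if π ω * t * (π ω)⁻¹ = s i then _ else _) = _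
      rw [hcond]
      split_ifs with h <;> simp [mul_neg, neg_mul, neg_neg, mul_comm, mul_assoc, mul_left_comm]

/-- The sign cocycle. -/
noncomputable def mu (w t : W) : ℤˣ := (eta cs w (t, 1)).2

lemma mu_wordProd (ω : List B) (t : W) : mu cs (π ω) t = signAt t (ris ω) := by
  rw [mu, eta_wordProd]
  simp

lemma eta_apply (w t : W) (ε : ℤˣ) :
    eta cs w (t, ε) = (w * t * w⁻¹, ε * mu cs w t) := by
  rcases cs.wordProd_surjective w with ⟨ω, rfl⟩
  rw [eta_wordProd, mu_wordProd]

lemma mu_mul (a b t : W) : mu cs (a * b) t = mu cs b t * mu cs a (b * t * b⁻¹) := by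
  have : eta cs (a * b) (t, 1) = eta cs a (eta cs b (t, 1)) := by
    rw [map_mul, Equiv.Perm.mul_apply]
  rw [mu, this, eta_apply cs b t 1, one_mul, eta_apply]

lemma mu_one (t : W) : mu cs 1 t = 1 := by
  rw [mu, map_one]
  rfl

lemma mu_mul_mu_inv (b t : W) : mu cs b t * mu cs b⁻¹ (b * t * b⁻¹) = 1 := by
  have := mu_mul cs b⁻¹ b t
  rw [inv_mul_cancel, mu_one] at this
  exact this.symm

lemma mu_simple_self (i : B) : mu cs (s i) (s i) = -1 := by
  have h : π [i] = s i := by simp [cs.wordProd_cons]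
  have := mu_wordProd cs [i] (s i)
  rw [h] at this
  rw [this]
  rw [show ris [i] = [s i] by simp]
  rw [signAt_cons, if_pos rfl, signAt_nil, mul_one]

lemma mu_reflection_self {t : W} (ht : cs.IsReflection t) : mu cs t t = -1 := by
  obtain ⟨u, i, rfl⟩ := ht
  set t := u * s i * u⁻¹ with hti
  have h1 : u⁻¹ * t * (u⁻¹)⁻¹ = s i := by rw [hti]; group
  have h2 : mu cs t t = mu cs u⁻¹ t * mu cs (u * s i) (u⁻¹ * t * u) := by
    rw [show t = u * s i * u⁻¹ from hti]
    nth_rewrite 1 [show u * s i * u⁻¹ = (u * s i) * u⁻¹ by group]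
    rw [mu_mul, inv_inv]
  have h3 : u⁻¹ * t * u = s i := by rw [hti]; group
  have h4 : mu cs (u * s i) (s i) = mu cs (s i) (s i) * mu cs u (s i * s i * (s i)⁻¹) := mu_mul ..
  have h5 : s i * s i * (s i)⁻¹ = s i := by group
  have h6 : mu cs u⁻¹ t * mu cs u (s i) = 1 := by
    have := mu_mul_mu_inv cs u (s i)
    rw [show u * s i * u⁻¹ = t from rfl] at this
    calc mu cs u⁻¹ t * mu cs u (s i) = mu cs u (s i) * mu cs u⁻¹ t := mul_comm _ _
    _ = 1 := this
  rw [h2, h3, h4, h5, mu_simple_self]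
  calc mu cs u⁻¹ t * (-1 * mu cs u (s i)) = -(mu cs u⁻¹ t * mu cs u (s i)) := by
        simp [mul_neg, neg_mul]
  _ = -1 := by rw [h6]

lemma mu_neg_iff {t : W} (ht : cs.IsReflection t) (w : W) :
    mu cs w t = -1 ↔ ℓ (w * t) < ℓ w := by
  have key : ∀ v : W, mu cs v t = -1 → ℓ (v * t) < ℓ v := by
    intro v hv
    obtain ⟨ω, hred, hω⟩ := cs.exists_reduced_word' v
    rw [hω, mu_wordProd] at hv
    have hmem : t ∈ ris ω := mem_of_signAt_ne_one (by rw [hv]; decide)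
    have := cs.isRightInversion_of_mem_rightInvSeq hred hmem
    rw [hω]
    exact this.2
  constructor
  · exact key w
  · intro hlt
    set v := w * t with hv
    have hw : v * t = w := by rw [hv, mul_assoc, ht.mul_self, mul_one]
    have h1 : mu cs w t = mu cs t t * mu cs v (t * t * t⁻¹) := by
      rw [← hw, mu_mul]
    rw [show t * t * t⁻¹ = t by group, mu_reflection_self cs ht] at h1
    rcases Int.units_eq_one_or (mu cs v t) with h | h
    · rw [h1, h]; simp
    · exfalso
      have := key v h
      rw [hw] at this
      exact absurd hlt (Nat.lt_asymm this)

/-- t is in the right inversion sequence of any reduced word, if it is a right inversion. -/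
lemma mem_rightInvSeq_of_lt {t : W} (ht : cs.IsReflection t) {ω : List B}
    (hred : cs.IsReduced ω) (hlt : ℓ (π ω * t) < ℓ (π ω)) : t ∈ ris ω := by
  have : mu cs (π ω) t = -1 := (mu_neg_iff cs ht (π ω)).mpr hlt
  rw [mu_wordProd] at this
  exact mem_of_signAt_ne_one (by rw [this]; decide)

/-- The strong exchange property. -/
lemma strongExchange {t : W} (ht : cs.IsReflection t) {ω : List B}
    (hred : cs.IsReduced ω) (hlt : ℓ (π ω * t) < ℓ (π ω)) :
    ∃ j < ω.length, π (ω.eraseIdx j) = π ω * t := by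
  have hmem := mem_rightInvSeq_of_lt cs ht hred hlt
  obtain ⟨j, hj, hjt⟩ := List.mem_iff_getElem.mp hmem
  rw [cs.length_rightInvSeq] at hj
  refine ⟨j, hj, ?_⟩
  have := cs.wordProd_mul_getD_rightInvSeq ω j
  rw [List.getD_eq_getElem _ 1 (by rwa [cs.length_rightInvSeq]), hjt] at this
  exact this.symm




/-! ### Every word has a reduced sublist with the same product -/

lemma exists_reduced_sublist_aux : ∀ n : ℕ, ∀ ω : List B, ω.length ≤ n →
    ∃ σ, σ.Sublist ω ∧ cs.IsReduced σ ∧ π σ = π ω := by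
  intro n
  induction n with
  | zero =>
    intro ω h
    rw [Nat.le_zero, List.length_eq_zero_iff] at h
    subst h
    exact ⟨[], Sublist.refl _, by simp [CoxeterSystem.IsReduced], rfl⟩
  | succ n ih =>
    intro ω hlen
    by_cases hred : cs.IsReduced ω
    · exact ⟨ω, Sublist.refl _, hred, rfl⟩
    · have hne : ω ≠ [] := by
        rintro rfl
        exact hred (by simp [CoxeterSystem.IsReduced])
      have hpos : 0 < ω.length := List.length_pos_iff.mpr hne
      have hex : ∃ j, ¬ cs.IsReduced (ω.take (j + 1)) := by
        refine ⟨ω.length - 1, ?_⟩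
        rwa [show ω.length - 1 + 1 = ω.length by omega, List.take_length]
      set j := Nat.find hex with hjdef
      have hj : ¬ cs.IsReduced (ω.take (j + 1)) := Nat.find_spec hex
      have hjlt : j < ω.length := by
        have hwit : ¬ cs.IsReduced (ω.take (ω.length - 1 + 1)) := by
          rwa [show ω.length - 1 + 1 = ω.length by omega, List.take_length]
        have := Nat.find_min' hex hwit
        omega
      have htkred : cs.IsReduced (ω.take j) := by
        rcases Nat.eq_zero_or_pos j with h0 | h0
        · rw [h0]; simp [CoxeterSystem.IsReduced]
        · have := Nat.find_min hex (m := j - 1) (by omega)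
          push_neg at this
          rwa [show j - 1 + 1 = j by omega] at this
      have hc : ω.take (j + 1) = ω.take j ++ [ω[j]] := by
        rw [List.take_succ, List.getElem?_eq_getElem hjlt]
        rfl
      set c := ω[j] with hcdef
      have hlentake : (ω.take j).length = j := by
        rw [List.length_take]; omega
      have hlv : ℓ (π (ω.take j)) = j := by rw [htkred, hlentake]
      have hvc : π (ω.take (j + 1)) = π (ω.take j) * s c := by
        rw [hc, cs.wordProd_append]
        congr 1
        simp [cs.wordProd_cons, cs.wordProd_nil]
      have hlen2 : ℓ (π (ω.take j) * s c) < ℓ (π (ω.take j)) := by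
        have hle : ℓ (π (ω.take (j + 1))) ≤ j + 1 := by
          have := cs.length_wordProd_le (ω.take (j + 1))
          rwa [List.length_take, min_eq_left (by omega)] at this
        have hne2 : ℓ (π (ω.take (j + 1))) ≠ j + 1 := by
          intro h
          apply hj
          rw [CoxeterSystem.IsReduced, h, List.length_take, min_eq_left (by omega)]
        have hne3 := cs.length_mul_simple_ne (π (ω.take j)) c
        rw [hvc] at hle hne2
        omega
      obtain ⟨k, hk, hkeq⟩ :=
        strongExchange cs (cs.isReflection_simple c) htkred hlen2
      set σ₀ := (ω.take j).eraseIdx k ++ ω.drop (j + 1) with hσ₀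
      have hσsub : σ₀.Sublist ω := by
        have h1 : σ₀.Sublist (ω.take j ++ ω.drop (j + 1)) :=
          Sublist.append (List.eraseIdx_sublist _ k) (Sublist.refl _)
        have h2 : ω.take j ++ ω.drop (j + 1) = ω.eraseIdx j :=
          (List.eraseIdx_eq_take_drop_succ ω j).symm
        rw [h2] at h1
        exact h1.trans (List.eraseIdx_sublist ω j)
      have hσprod : π σ₀ = π ω := by
        conv_rhs => rw [← List.take_append_drop (j + 1) ω]
        rw [hσ₀, cs.wordProd_append, cs.wordProd_append, hkeq, hvc]
      have hσlen : σ₀.length ≤ n := by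
        rw [hσ₀, List.length_append, List.length_drop]
        have hk' : k < (ω.take j).length := hk
        have := List.length_eraseIdx_add_one hk'
        omega
      obtain ⟨σ, hsub, hredσ, hprod⟩ := ih σ₀ hσlen
      exact ⟨σ, hsub.trans hσsub, hredσ, hprod.trans hσprod⟩

lemma exists_reduced_sublist (ω : List B) :
    ∃ σ, σ.Sublist ω ∧ cs.IsReduced σ ∧ π σ = π ω :=
  exists_reduced_sublist_aux cs ω.length ω le_rfl

/-! ### The chain (Bruhat graph) order -/

/-- An edge of the Bruhat graph. -/
def edge (u v : W) : Prop := ∃ t, cs.IsReflection t ∧ v = u * t ∧ ℓ u < ℓ v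

/-- The chain order: reflexive-transitive closure of the Bruhat graph. -/
def chain : W → W → Prop := Relation.ReflTransGen (edge cs)

lemma chain.refl (u : W) : chain cs u u := Relation.ReflTransGen.refl

lemma chain_length_le {u w : W} (h : chain cs u w) : ℓ u ≤ ℓ w := by
  induction h with
  | refl => exact le_rfl
  | tail h₁ h₂ ih =>
    obtain ⟨t, _, rfl, hlt⟩ := h₂
    omega

lemma eq_of_chain_of_length_ge {u w : W} (h : chain cs u w) (hl : ℓ w ≤ ℓ u) : u = w := by
  rcases (Relation.ReflTransGen.cases_tail h) with rfl | ⟨x, hux, hxw⟩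
  · rfl
  · exfalso
    obtain ⟨t, _, rfl, hlt⟩ := hxw
    have := chain_length_le cs hux
    omega

lemma length_lt_of_chain_ne {u w : W} (h : chain cs u w) (hne : u ≠ w) : ℓ u < ℓ w := by
  by_contra hcon
  exact hne (eq_of_chain_of_length_ge cs h (by omega))

lemma edge_mul_simple {u : W} {i : B} (h : ℓ u < ℓ (u * s i)) : edge cs u (u * s i) :=
  ⟨s i, cs.isReflection_simple i, rfl, h⟩

lemma edge_of_simple_lt {u : W} {i : B} (h : ℓ (u * s i) < ℓ u) : edge cs (u * s i) u :=
  ⟨s i, cs.isReflection_simple i, (cs.simple_mul_simple_cancel_right i).symm, h⟩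

lemma simple_conj_reflection {t : W} (ht : cs.IsReflection t) (i : B) :
    cs.IsReflection (s i * t * s i) := by
  have := ht.conj (s i)
  rwa [cs.inv_simple] at this

/-! ### Deodhar's property Z -/

lemma Zlemma : ∀ n : ℕ, ∀ u v : W, chain cs u v → ℓ v ≤ n → ∀ i : B,
    ℓ u < ℓ (u * s i) →
    ((ℓ v < ℓ (v * s i) → chain cs (u * s i) (v * s i)) ∧
     (ℓ (v * s i) < ℓ v → chain cs u (v * s i) ∧ chain cs (u * s i) v)) := by
  intro n
  induction n with
  | zero =>
    intro u v hchain hv i hu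
    rcases (Relation.ReflTransGen.cases_tail hchain) with rfl | ⟨x, hux, hxv⟩
    · constructor
      · intro _; exact chain.refl cs _
      · intro h; omega
    · obtain ⟨t, htrefl, rfl, hlt⟩ := hxv
      omega
  | succ n ih =>
    intro u v hchain hv i hu
    rcases (Relation.ReflTransGen.cases_tail hchain) with rfl | ⟨x, hux, hxv⟩
    · constructor
      · intro _; exact chain.refl cs _
      · intro h; omega
    · obtain ⟨t, htrefl, rfl, hlt⟩ := hxv
      -- v = x * t
      set v := x * t with hvdef
      have hA := ih u x hux (by omega) i hu
      have hconj : ∀ y : W, (y * s i) * (s i * t * s i) = y * t * s i := by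
        intro y
        rw [show y * s i * (s i * t * s i) = y * (s i * s i) * t * s i by group,
          cs.simple_mul_simple_self, mul_one]
      constructor
      · intro hvs
        by_cases hxs : ℓ (x * s i) < ℓ x
        · obtain ⟨hux2, husx⟩ := hA.2 hxs
          exact (husx.tail ⟨t, htrefl, rfl, hlt⟩).tail (edge_mul_simple cs hvs)
        · have hxs' : ℓ x < ℓ (x * s i) := by
            have := cs.length_mul_simple_ne x i
            omega
          have h1 := hA.1 hxs'
          have hxlen : ℓ (x * s i) = ℓ x + 1 := by
            have := cs.length_mul_simple x i
            omega
          have hvlen : ℓ (v * s i) = ℓ v + 1 := by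
            have := cs.length_mul_simple v i
            omega
          refine h1.tail ⟨s i * t * s i, simple_conj_reflection cs htrefl i, ?_, ?_⟩
          · rw [hconj x]
          · omega
      · intro hvs
        by_cases hxs : ℓ (x * s i) < ℓ x
        · obtain ⟨hux2, husx⟩ := hA.2 hxs
          have hxlen : ℓ (x * s i) + 1 = ℓ x := by
            have := cs.length_mul_simple x i
            omega
          have hvlen : ℓ (v * s i) + 1 = ℓ v := by
            have := cs.length_mul_simple v i
            omega
          constructor
          · refine hux2.tail ⟨s i * t * s i, simple_conj_reflection cs htrefl i, ?_, ?_⟩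
            · rw [hconj x]
            · omega
          · exact husx.tail ⟨t, htrefl, rfl, hlt⟩
        · have hxs' : ℓ x < ℓ (x * s i) := by
            have := cs.length_mul_simple_ne x i
            omega
          have h1 := hA.1 hxs'
          have hxlen : ℓ (x * s i) = ℓ x + 1 := by
            have := cs.length_mul_simple x i
            omega
          have hvlen : ℓ (v * s i) + 1 = ℓ v := by
            have := cs.length_mul_simple v i
            omega
          by_cases hveq : v * s i = x
          · constructor
            · rw [hveq]; exact hux
            · have hxv2 : x * s i = v := by
                rw [← hveq, cs.simple_mul_simple_cancel_right]
              rw [← hxv2]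
              exact h1
          · have hlen_ne : ℓ (v * s i) ≠ ℓ (x * s i) := by
              intro he
              have heq : v * s i = (x * s i) * (s i * t * s i) := by rw [hconj x]
              have := (simple_conj_reflection cs htrefl i).length_mul_left_ne (x * s i)
              rw [← heq] at this
              exact this he
            by_cases hcase : ℓ (x * s i) < ℓ (v * s i)
            · have hedge : edge cs (x * s i) (v * s i) :=
                ⟨s i * t * s i, simple_conj_reflection cs htrefl i, (hconj x).symm, hcase⟩
              constructor
              · exact ((Relation.ReflTransGen.single (edge_mul_simple cs hu)).trans h1).tail
                  hedge
              · exact (h1.tail hedge).tail (edge_of_simple_lt cs hvs)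
            · -- impossible configuration
              exfalso
              have hconf : ℓ (v * s i) = ℓ x ∧ ℓ v = ℓ x + 1 := by omega
              obtain ⟨τ₁, hτ₁red, hτ₁⟩ := cs.exists_reduced_word' (v * s i)
              have hτ₁len : τ₁.length = ℓ x := by
                rw [← hconf.1, hτ₁]; exact hτ₁red.symm
              set τ := τ₁ ++ [i] with hτdef
              have hτprod : π τ = v := by
                rw [hτdef, cs.wordProd_append, ← hτ₁,
                  show π [i] = s i by simp [cs.wordProd_cons, cs.wordProd_nil],
                  cs.simple_mul_simple_cancel_right]
              have hτred : cs.IsReduced τ := by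
                rw [CoxeterSystem.IsReduced, hτprod, hτdef, List.length_append, List.length_singleton,
                  hτ₁len]
                omega
              have hvt : v * t = x := by
                rw [hvdef, mul_assoc, htrefl.mul_self, mul_one]
              have hlt2 : ℓ (π τ * t) < ℓ (π τ) := by
                rw [hτprod, hvt]; omega
              obtain ⟨k, hk, hkeq⟩ := strongExchange cs htrefl hτred hlt2
              rw [hτprod, hvt] at hkeq
              by_cases hklast : k < τ₁.length
              · rw [hτdef, List.eraseIdx_append_of_lt_length hklast] at hkeq
                have hxs2 : x * s i = π (τ₁.eraseIdx k) := by
                  rw [← hkeq, cs.wordProd_append,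
                    show π [i] = s i by simp [cs.wordProd_cons, cs.wordProd_nil],
                    cs.simple_mul_simple_cancel_right]
                have hle := cs.length_wordProd_le (τ₁.eraseIdx k)
                have := List.length_eraseIdx_add_one hklast
                rw [← hxs2] at hle
                omega
              · have hkeq2 : τ.eraseIdx k = τ₁ := by
                  rw [hτdef, List.eraseIdx_append_of_length_le (by omega)]
                  have : k - τ₁.length = 0 := by
                    rw [hτdef, List.length_append, List.length_singleton] at hk
                    omega
                  rw [this]
                  simp
                rw [hkeq2, ← hτ₁] at hkeq
                exact hveq hkeq

/-! ### Chain order equals the subword order -/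

lemma chain_of_reduced_sublist : ∀ (ω σ : List B), cs.IsReduced ω → σ.Sublist ω →
    cs.IsReduced σ → chain cs (π σ) (π ω) := by
  intro ω
  induction ω using List.reverseRecOn with
  | nil =>
    intro σ _ hsub _
    rw [List.sublist_nil.mp hsub]
    exact chain.refl cs _
  | append_singleton κ c ihκ =>
    intro σ hred hsub hredσ
    have hκred : cs.IsReduced κ := by
      have := hred.take κ.length
      rwa [List.take_left] at this
    have hπ : π (κ ++ [c]) = π κ * s c := by
      rw [cs.wordProd_append]
      congr 1
      simp [cs.wordProd_cons, cs.wordProd_nil]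
    have hκlt : ℓ (π κ) < ℓ (π (κ ++ [c])) := by
      rw [hred, hκred, List.length_append, List.length_singleton]
      omega
    obtain ⟨σ₁, σ₂, rfl, h₁, h₂⟩ := List.sublist_append_iff.mp hsub
    rcases List.sublist_singleton.mp h₂ with rfl | rfl
    · rw [List.append_nil] at hredσ ⊢
      have := ihκ σ₁ hκred h₁ hredσ
      refine this.tail ?_
      rw [hπ] at hκlt ⊢
      exact edge_mul_simple cs hκlt
    · have hσ₁red : cs.IsReduced σ₁ := by
        have := hredσ.take σ₁.length
        rwa [List.take_left] at this
      have hch := ihκ σ₁ hκred h₁ hσ₁red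
      have hπσ : π (σ₁ ++ [c]) = π σ₁ * s c := by
        rw [cs.wordProd_append]
        congr 1
        simp [cs.wordProd_cons, cs.wordProd_nil]
      have hσlt : ℓ (π σ₁) < ℓ (π (σ₁ ++ [c])) := by
        rw [hredσ, hσ₁red, List.length_append, List.length_singleton]
        omega
      have := (Zlemma cs (ℓ (π κ)) (π σ₁) (π κ) hch le_rfl c
        (by rwa [← hπσ])).1 (by rwa [← hπ])
      rw [hπ, hπσ]
      exact this

lemma exists_sublist_of_chain {u w : W} (h : chain cs u w) :
    ∀ ω, cs.IsReduced ω → π ω = w →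
    ∃ σ, σ.Sublist ω ∧ cs.IsReduced σ ∧ π σ = u := by
  induction h with
  | refl =>
    intro ω hred hω
    exact ⟨ω, Sublist.refl _, hred, hω⟩
  | @tail b c h₁ h₂ ih =>
    intro ω hred hω
    obtain ⟨t, htrefl, rfl, hlen⟩ := h₂
    have hbt : (b * t) * t = b := by rw [mul_assoc, htrefl.mul_self, mul_one]
    have hlt : ℓ (π ω * t) < ℓ (π ω) := by rw [hω, hbt]; exact hlen
    obtain ⟨k, hk, hkeq⟩ := strongExchange cs htrefl hred hlt
    obtain ⟨σ₁, hsub₁, hred₁, hprod₁⟩ := exists_reduced_sublist cs (ω.eraseIdx k)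
    obtain ⟨σ, hsub, hredσ, hprodσ⟩ := ih σ₁ hred₁ (by rw [hprod₁, hkeq, hω, hbt])
    exact ⟨σ, hsub.trans (hsub₁.trans (List.eraseIdx_sublist ω k)), hredσ, hprodσ⟩

lemma bruhatLE_iff_chain (u w : W) : cs.BruhatLE u w ↔ chain cs u w := by
  constructor
  · rintro ⟨ω, hred, hω, ω', hsub, hω'⟩
    obtain ⟨σ, hsubσ, hredσ, hprodσ⟩ := exists_reduced_sublist cs ω'
    have := chain_of_reduced_sublist cs ω σ hred (hsubσ.trans hsub) hredσ
    rwa [hprodσ, hω', hω] at this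
  · intro h
    obtain ⟨ω, hred, hω⟩ := cs.exists_reduced_word' w
    obtain ⟨σ, hsub, hredσ, hprod⟩ := exists_sublist_of_chain cs h ω hred hω.symm
    exact ⟨ω, hred, hω.symm, σ, hsub, hprod⟩





/-! ### The diamond property -/

lemma diamond_aux : ∀ n : ℕ, ∀ u w : W, ℓ w ≤ n → chain cs u w → u ≠ w →
    ℓ w = ℓ u + 2 →
    ∃ a b : W, a ≠ b ∧ ∀ v : W,
      ((chain cs u v ∧ u ≠ v) ∧ (chain cs v w ∧ v ≠ w)) ↔ (v = a ∨ v = b) := by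
  intro n
  induction n with
  | zero => intro u w hn _ _ hlen; omega
  | succ n ih =>
    intro u w hn hchain hne hlen
    have hw1 : w ≠ 1 := by
      intro h; rw [h, cs.length_one] at hlen; omega
    obtain ⟨i, hdesc⟩ := cs.exists_rightDescent_of_ne_one hw1
    have hdesc' : ℓ (w * s i) < ℓ w := hdesc
    have hws : ℓ (w * s i) + 1 = ℓ w := by have := cs.length_mul_simple w i; omega
    by_cases hus : ℓ u < ℓ (u * s i)
    · -- CASE B : s i goes up from u
      obtain ⟨h1, h2⟩ := (Zlemma cs (ℓ w) u w hchain le_rfl i hus).2 hdesc'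
      have husl : ℓ (u * s i) = ℓ u + 1 := by have := cs.length_mul_simple u i; omega
      refine ⟨u * s i, w * s i, ?_, ?_⟩
      · intro h
        apply hne
        have h' := congrArg (fun x => x * s i) h
        simpa only [cs.simple_mul_simple_cancel_right] using h'
      · intro v
        constructor
        · rintro ⟨⟨huv, hnuv⟩, ⟨hvw, hnvw⟩⟩
          have hluv : ℓ u < ℓ v := length_lt_of_chain_ne cs huv hnuv
          have hlvw : ℓ v < ℓ w := length_lt_of_chain_ne cs hvw hnvw
          have hlv : ℓ v = ℓ u + 1 := by omega
          by_cases hvs : ℓ (v * s i) < ℓ v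
          · left
            obtain ⟨hv1, _⟩ := (Zlemma cs (ℓ v) u v huv le_rfl i hus).2 hvs
            have heq : u = v * s i := eq_of_chain_of_length_ge cs hv1 (by
              have := cs.length_mul_simple v i; omega)
            rw [heq, cs.simple_mul_simple_cancel_right]
          · right
            have hvs' : ℓ v < ℓ (v * s i) := by
              have := cs.length_mul_simple_ne v i; omega
            obtain ⟨hv1, _⟩ := (Zlemma cs (ℓ w) v w hvw le_rfl i hvs').2 hdesc'
            exact eq_of_chain_of_length_ge cs hv1 (by omega)
        · rintro (rfl | rfl)
          · refine ⟨⟨Relation.ReflTransGen.single (edge_mul_simple cs hus), ?_⟩, h2, ?_⟩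
            · intro h; have := congrArg cs.length h; omega
            · intro h; have := congrArg cs.length h; omega
          · refine ⟨⟨h1, ?_⟩, Relation.ReflTransGen.single (edge_of_simple_lt cs hdesc'), ?_⟩
            · intro h; have := congrArg cs.length h; omega
            · intro h; have := congrArg cs.length h; omega
    · -- CASE A : s i goes down from u
      have hus' : ℓ (u * s i) < ℓ u := by have := cs.length_mul_simple_ne u i; omega
      have husl : ℓ (u * s i) + 1 = ℓ u := by have := cs.length_mul_simple u i; omega
      have huu : (u * s i) * s i = u := cs.simple_mul_simple_cancel_right i
      have hww : (w * s i) * s i = w := cs.simple_mul_simple_cancel_right i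
      have hu'u : chain cs (u * s i) u := Relation.ReflTransGen.single (edge_of_simple_lt cs hus')
      have hu'w : chain cs (u * s i) w := hu'u.trans hchain
      have hu'su : ℓ (u * s i) < ℓ ((u * s i) * s i) := by rw [huu]; omega
      obtain ⟨hA1, _⟩ := (Zlemma cs (ℓ w) (u * s i) w hu'w le_rfl i hu'su).2 hdesc'
      -- hA1 : chain (u * s i) (w * s i)
      have hne' : u * s i ≠ w * s i := by
        intro h; have := congrArg cs.length h; omega
      have hlen' : ℓ (w * s i) = ℓ (u * s i) + 2 := by omega
      obtain ⟨a', b', hab', hiff⟩ := ih (u * s i) (w * s i) (by omega) hA1 hne' hlen'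
      -- abbreviations for the two interval predicates
      set Mid : W → Prop := fun v =>
        ((chain cs u v ∧ u ≠ v) ∧ (chain cs v w ∧ v ≠ w)) with hMid
      set Mid' : W → Prop := fun v =>
        ((chain cs (u * s i) v ∧ u * s i ≠ v) ∧ (chain cs v (w * s i) ∧ v ≠ w * s i)) with hMid'
      have midlen : ∀ v, Mid v → ℓ v = ℓ u + 1 := by
        rintro v ⟨⟨huv, hnuv⟩, ⟨hvw, hnvw⟩⟩
        have := length_lt_of_chain_ne cs huv hnuv
        have := length_lt_of_chain_ne cs hvw hnvw
        omega
      have midlen' : ∀ v, Mid' v → ℓ v = ℓ u := by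
        rintro v ⟨⟨huv, hnuv⟩, ⟨hvw, hnvw⟩⟩
        have := length_lt_of_chain_ne cs huv hnuv
        have := length_lt_of_chain_ne cs hvw hnvw
        omega
      have P1 : ∀ v, Mid v → ℓ (v * s i) < ℓ v → Mid' (v * s i) := by
        rintro v ⟨⟨huv, hnuv⟩, ⟨hvw, hnvw⟩⟩ hvs
        have hlv : ℓ v = ℓ u + 1 := midlen v ⟨⟨huv, hnuv⟩, ⟨hvw, hnvw⟩⟩
        have hlvs : ℓ (v * s i) + 1 = ℓ v := by have := cs.length_mul_simple v i; omega
        have hc1 : chain cs (u * s i) v := hu'u.trans huv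
        obtain ⟨hz1, _⟩ := (Zlemma cs (ℓ v) (u * s i) v hc1 le_rfl i hu'su).2 hvs
        -- hz1 : chain (u * s i) (v * s i)
        have hc2 : chain cs (v * s i) w :=
          (Relation.ReflTransGen.single (edge_of_simple_lt cs hvs)).trans hvw
        have hvss : ℓ (v * s i) < ℓ ((v * s i) * s i) := by
          rw [cs.simple_mul_simple_cancel_right]; omega
        obtain ⟨hz2, _⟩ := (Zlemma cs (ℓ w) (v * s i) w hc2 le_rfl i hvss).2 hdesc'
        -- hz2 : chain (v * s i) (w * s i)
        refine ⟨⟨hz1, ?_⟩, hz2, ?_⟩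
        · intro h; have := congrArg cs.length h; omega
        · intro h; have := congrArg cs.length h; omega
      have P2 : ∀ v, Mid v → ℓ v < ℓ (v * s i) → v = w * s i := by
        rintro v ⟨⟨huv, hnuv⟩, ⟨hvw, hnvw⟩⟩ hvs
        have hlv : ℓ v = ℓ u + 1 := midlen v ⟨⟨huv, hnuv⟩, ⟨hvw, hnvw⟩⟩
        obtain ⟨hz1, _⟩ := (Zlemma cs (ℓ w) v w hvw le_rfl i hvs).2 hdesc'
        exact eq_of_chain_of_length_ge cs hz1 (by omega)
      have P3 : ∀ y, Mid' y → ℓ y < ℓ (y * s i) → Mid (y * s i) := by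
        rintro y ⟨⟨huy, hnuy⟩, ⟨hyw, hnyw⟩⟩ hys
        have hly : ℓ y = ℓ u := midlen' y ⟨⟨huy, hnuy⟩, ⟨hyw, hnyw⟩⟩
        have hlys : ℓ (y * s i) = ℓ y + 1 := by have := cs.length_mul_simple y i; omega
        have hz1 := (Zlemma cs (ℓ y) (u * s i) y huy le_rfl i hu'su).1 hys
        rw [huu] at hz1
        -- hz1 : chain u (y * s i)
        have hwss : ℓ (w * s i) < ℓ ((w * s i) * s i) := by rw [hww]; omega
        have hz2 := (Zlemma cs (ℓ (w * s i)) y (w * s i) hyw le_rfl i hys).1 hwss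
        rw [hww] at hz2
        -- hz2 : chain (y * s i) w
        refine ⟨⟨hz1, ?_⟩, hz2, ?_⟩
        · intro h; have := congrArg cs.length h; omega
        · intro h; have := congrArg cs.length h; omega
      have P4 : ∀ y, Mid' y → ℓ (y * s i) < ℓ y → y = u := by
        rintro y ⟨⟨huy, hnuy⟩, ⟨hyw, hnyw⟩⟩ hys
        have hly : ℓ y = ℓ u := midlen' y ⟨⟨huy, hnuy⟩, ⟨hyw, hnyw⟩⟩
        have hlys : ℓ (y * s i) + 1 = ℓ y := by have := cs.length_mul_simple y i; omega
        obtain ⟨hz1, _⟩ := (Zlemma cs (ℓ y) (u * s i) y huy le_rfl i hu'su).2 hys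
        -- hz1 : chain (u * s i) (y * s i)
        have heq : u * s i = y * s i := eq_of_chain_of_length_ge cs hz1 (by omega)
        have h2 := congrArg (fun x => x * s i) heq
        simp only [cs.simple_mul_simple_cancel_right] at h2
        exact h2.symm
      have P5a : Mid' u → Mid (w * s i) := by
        rintro ⟨⟨_, _⟩, ⟨huw', hnuw'⟩⟩
        refine ⟨⟨huw', hnuw'⟩, Relation.ReflTransGen.single (edge_of_simple_lt cs hdesc'), ?_⟩
        intro h; have := congrArg cs.length h; omega
      have P5b : Mid (w * s i) → Mid' u := by
        rintro ⟨⟨huw', hnuw'⟩, _⟩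
        refine ⟨⟨hu'u, ?_⟩, ⟨huw', hnuw'⟩⟩
        intro h; have := congrArg cs.length h; omega
      -- main assembly
      have main : ∀ c' : W, c' ≠ u → (∀ v, Mid' v ↔ (v = u ∨ v = c')) →
          ∃ a b : W, a ≠ b ∧ ∀ v, Mid v ↔ (v = a ∨ v = b) := by
        intro c' hc'ne hiff2
        have hmid'u : Mid' u := (hiff2 u).mpr (Or.inl rfl)
        have hmid'c : Mid' c' := (hiff2 c').mpr (Or.inr rfl)
        have hlc' : ℓ c' = ℓ u := midlen' c' hmid'c
        have hc's : ℓ c' < ℓ (c' * s i) := by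
          by_contra hcon
          have hlt : ℓ (c' * s i) < ℓ c' := by
            have := cs.length_mul_simple_ne c' i; omega
          exact hc'ne (P4 c' hmid'c hlt)
        have hmidc's : Mid (c' * s i) := P3 c' hmid'c hc's
        have hmidw' : Mid (w * s i) := P5a hmid'u
        refine ⟨c' * s i, w * s i, ?_, ?_⟩
        · intro h
          have h' := congrArg (fun x => x * s i) h
          simp only [cs.simple_mul_simple_cancel_right] at h'
          rw [h'] at hlc'
          omega
        · intro v
          constructor
          · intro hmidv
            by_cases hvs : ℓ (v * s i) < ℓ v
            · have hm := P1 v hmidv hvs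
              rcases (hiff2 _).mp hm with h | h
              · exfalso
                have hveq : v = u * s i := by
                  have := congrArg (fun x => x * s i) h
                  simpa only [cs.simple_mul_simple_cancel_right] using this
                have := midlen v hmidv
                rw [hveq] at this
                omega
              · left
                have := congrArg (fun x => x * s i) h
                simpa only [cs.simple_mul_simple_cancel_right] using this
            · right
              have hvs' : ℓ v < ℓ (v * s i) := by
                have := cs.length_mul_simple_ne v i; omega
              exact P2 v hmidv hvs'
          · rintro (rfl | rfl)
            · exact hmidc's
            · exact hmidw'
      by_cases humid : u = a' ∨ u = b'
      · rcases humid with h | h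
        · exact main b' (fun hh => hab' (by rw [← h, hh])) (fun v => by
            rw [show Mid' v ↔ (v = a' ∨ v = b') from hiff v, ← h])
        · refine main a' (fun hh => hab' (by rw [← h, hh])) (fun v => ?_)
          rw [show Mid' v ↔ (v = a' ∨ v = b') from hiff v, ← h]
          exact or_comm
      · push_neg at humid
        obtain ⟨hua, hub⟩ := humid
        have hmid'a : Mid' a' := (hiff a').mpr (Or.inl rfl)
        have hmid'b : Mid' b' := (hiff b').mpr (Or.inr rfl)
        have ha's : ℓ a' < ℓ (a' * s i) := by
          by_contra hcon
          have hlt : ℓ (a' * s i) < ℓ a' := by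
            have := cs.length_mul_simple_ne a' i; omega
          exact hua (P4 a' hmid'a hlt).symm
        have hb's : ℓ b' < ℓ (b' * s i) := by
          by_contra hcon
          have hlt : ℓ (b' * s i) < ℓ b' := by
            have := cs.length_mul_simple_ne b' i; omega
          exact hub (P4 b' hmid'b hlt).symm
        refine ⟨a' * s i, b' * s i, ?_, ?_⟩
        · intro h
          have h' := congrArg (fun x => x * s i) h
          simp only [cs.simple_mul_simple_cancel_right] at h'
          exact hab' h'
        · intro v
          constructor
          · intro hmidv
            by_cases hvs : ℓ (v * s i) < ℓ v
            · have hm := P1 v hmidv hvs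
              rcases (hiff _).mp hm with h | h
              · left
                have := congrArg (fun x => x * s i) h
                simpa only [cs.simple_mul_simple_cancel_right] using this
              · right
                have := congrArg (fun x => x * s i) h
                simpa only [cs.simple_mul_simple_cancel_right] using this
            · exfalso
              have hvs' : ℓ v < ℓ (v * s i) := by
                have := cs.length_mul_simple_ne v i; omega
              have hveq := P2 v hmidv hvs'
              rw [hveq] at hmidv
              rcases (hiff u).mp (P5b hmidv) with h | h
              · exact hua h
              · exact hub h
          · rintro (rfl | rfl)
            · exact P3 a' hmid'a ha's
            · exact P3 b' hmid'b hb's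


end BruhatDiamond
end

theorem bruhat_interval_length_two_diamond
    {B W : Type*} [Group W] {M : CoxeterMatrix B} (cs : CoxeterSystem M W)
    [Finite W]
    (u w : W) (huw : cs.BruhatLT u w)
    (hlen : cs.length w = cs.length u + 2) :
    Nat.card {v : W // cs.BruhatLT u v ∧ cs.BruhatLT v w} = 2 := by
  classical
  have hchain : BruhatDiamond.chain cs u w :=
    (BruhatDiamond.bruhatLE_iff_chain cs u w).mp huw.1
  obtain ⟨a, b, hab, hiff⟩ :=
    BruhatDiamond.diamond_aux cs (cs.length w) u w le_rfl hchain huw.2 hlen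
  have hiff' : ∀ v : W, (cs.BruhatLT u v ∧ cs.BruhatLT v w) ↔ (v = a ∨ v = b) := by
    intro v
    rw [← hiff v]
    simp only [CoxeterSystem.BruhatLT, BruhatDiamond.bruhatLE_iff_chain]
  have e1 : {v : W // cs.BruhatLT u v ∧ cs.BruhatLT v w} ≃ {v : W // v ∈ ({a, b} : Set W)} :=
    Equiv.subtypeEquivRight (fun v => by
      rw [hiff' v]; simp [Set.mem_insert_iff])
  rw [Nat.card_congr e1]
  have h2 : Nat.card {v : W // v ∈ ({a, b} : Set W)} = ({a, b} : Set W).ncard :=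
    Nat.card_coe_set_eq _
  rw [h2, Set.ncard_pair hab]
end

section
/- For u_ℓ(sl2) and k > 0, there is a short exact sequence of U_ℓ(sl2)-modules 0 → L(kℓ - 2) → W(kℓ) → L(kℓ) → 0, where W(kℓ) is the Weyl module of highest weight kℓ at a primitive ℓ-th root of unity. -/
/-!
STATEMENT 17: For `U_ℓ(sl₂)` (Lusztig's divided-power quantum group at a primitive
`ℓ`-th root of unity `ξ`, `ℓ` odd) and `k > 0`, there is a short exact sequence of
`U_ℓ(sl₂)`-modules `0 → L(kℓ - 2) → W(kℓ) → L(kℓ) → 0`, where `W(kℓ)` is the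
`(kℓ+1)`-dimensional Weyl module of highest weight `kℓ`.

The Weyl module is realized concretely on the divided-power basis
`m_n = F^{(n)} v`, `0 ≤ n ≤ kℓ`, the divided powers acting by
`E^{(a)} m_n = [μ-n+a; a]_ξ m_{n-a}` and `F^{(b)} m_n = [n+b; b]_ξ m_{n+b}`,
where `[·;·]_ξ` is the Gaussian binomial evaluated at `ξ`.  A `U_ℓ(sl₂)`-submodule is
a subspace stable under all divided powers.  The statement asserts the existence of a
submodule `L'` which is simple with highest weight vector `m_1` of weight `kℓ - 2`
(killed by all `E^{(a)}`, `a ≥ 1`), is a maximal submodule (so the quotient is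
simple), and does not contain `m_0` (so the quotient has highest weight `kℓ`):
`L' ≅ L(kℓ-2)` and `W(kℓ)/L' ≅ L(kℓ)`.
-/

noncomputable section

open LaurentPolynomial

/-- Balanced Gaussian binomial `[n; t]` in `ℤ[v,v⁻¹]`, via the `q`-Pascal rule. -/
def gaussBinom : ℕ → ℕ → LaurentPolynomial ℤ
  | _, 0 => 1
  | 0, _ + 1 => 0
  | n + 1, t + 1 =>
      T (t + 1 : ℤ) * gaussBinom n (t + 1) + T (-((n : ℤ) - t)) * gaussBinom n t

/-- Evaluation of a Laurent polynomial at a nonzero complex number. -/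
def evalL (ξ : ℂ) (p : LaurentPolynomial ℤ) : ℂ :=
  Finsupp.sum (AddMonoidAlgebra.coeff p) fun n c => (c : ℂ) * ξ ^ n

/-- The Weyl module `W(μ)` for `U_ℓ(sl₂)`, on the basis `m_0, …, m_μ`. -/
abbrev WeylC (μ : ℕ) : Type := Fin (μ + 1) →₀ ℂ

/-- Divided power `E^{(a)}`: `E^{(a)} m_n = [μ-n+a; a]_ξ · m_{n-a}`. -/
def EdOp (ξ : ℂ) (μ a : ℕ) : WeylC μ →ₗ[ℂ] WeylC μ :=
  Finsupp.lift (WeylC μ) ℂ (Fin (μ + 1)) fun n =>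
    if a ≤ (n : ℕ) then
      evalL ξ (gaussBinom (μ - n + a) a) •
        Finsupp.single ⟨(n : ℕ) - a, lt_of_le_of_lt (Nat.sub_le _ _) n.isLt⟩ 1
    else 0

/-- Divided power `F^{(b)}`: `F^{(b)} m_n = [n+b; b]_ξ · m_{n+b}`. -/
def FdOp (ξ : ℂ) (μ b : ℕ) : WeylC μ →ₗ[ℂ] WeylC μ :=
  Finsupp.lift (WeylC μ) ℂ (Fin (μ + 1)) fun n =>
    if h : (n : ℕ) + b ≤ μ then
      evalL ξ (gaussBinom ((n : ℕ) + b) b) •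
        Finsupp.single ⟨(n : ℕ) + b, Nat.lt_succ_of_le h⟩ 1
    else 0

/-- A `U_ℓ(sl₂)`-submodule of the Weyl module: a subspace stable under all divided
powers of `E` and `F`. -/
def IsUSubmodule (ξ : ℂ) (μ : ℕ) (N : Submodule ℂ (WeylC μ)) : Prop :=
  ∀ (a : ℕ), ∀ x ∈ N, EdOp ξ μ a x ∈ N ∧ FdOp ξ μ a x ∈ N

variable (ξ : ℂ)

lemma evalL_zero : evalL ξ 0 = 0 := by simp [evalL]

lemma evalL_add (p q : LaurentPolynomial ℤ) :
    evalL ξ (p + q) = evalL ξ p + evalL ξ q := by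
  unfold evalL; rw [AddMonoidAlgebra.coeff_add]
  exact Finsupp.sum_add_index' (by simp) (by intros; push_cast; ring)

lemma evalL_single (n : ℤ) (c : ℤ) :
    evalL ξ (AddMonoidAlgebra.single n c : LaurentPolynomial ℤ) = (c : ℂ) * ξ ^ n := by
  unfold evalL; rw [AddMonoidAlgebra.coeff_single]
  exact Finsupp.sum_single_index (by simp)

lemma evalL_one : evalL ξ 1 = 1 := by
  have : (1 : LaurentPolynomial ℤ) = AddMonoidAlgebra.single 0 1 := rfl
  rw [this, evalL_single]; simp

lemma T_mul_single (a b c : ℤ) :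
    HMul.hMul (α := ℤ[T;T⁻¹]) (β := ℤ[T;T⁻¹]) (γ := ℤ[T;T⁻¹]) (T a) (AddMonoidAlgebra.single b c) =
      (AddMonoidAlgebra.single (a+b) c : ℤ[T;T⁻¹]) := by
  rw [single_eq_C_mul_T, single_eq_C_mul_T, mul_left_comm, ← T_add, add_comm]

lemma evalL_T_mul (hξ0 : ξ ≠ 0) (a : ℤ) (p : LaurentPolynomial ℤ) :
    evalL ξ (T a * p) = ξ ^ a * evalL ξ p := by
  induction p using AddMonoidAlgebra.induction with
  | zero => simp [evalL_zero]
  | single_add b c f hb hc ih =>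
      rw [mul_add, evalL_add, evalL_add, ih, T_mul_single, evalL_single, evalL_single,
        zpow_add₀ hξ0]
      ring

def evalG (m t : ℕ) : ℂ := evalL ξ (gaussBinom m t)

lemma gaussBinom_zero_of_lt : ∀ {n t : ℕ}, n < t → gaussBinom n t = 0 := by
  intro n
  induction n with
  | zero => intro t ht; obtain ⟨t, rfl⟩ := Nat.exists_eq_add_of_lt ht; rfl
  | succ n ih =>
      intro t ht
      obtain ⟨s, rfl⟩ : ∃ s, t = s + 1 := ⟨t - 1, by omega⟩
      show T _ * gaussBinom n (s+1) + T _ * gaussBinom n s = 0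
      rw [ih (by omega), ih (by omega), mul_zero, mul_zero, add_zero]

lemma evalG_zero_right (m : ℕ) : evalG ξ m 0 = 1 := by
  cases m <;> exact evalL_one ξ

lemma evalG_zero_of_lt {n t : ℕ} (h : n < t) : evalG ξ n t = 0 := by
  rw [evalG, gaussBinom_zero_of_lt h, evalL_zero]

lemma evalG_diag (m : ℕ) : evalG ξ m m = 1 := by
  induction m with
  | zero => exact evalL_one ξ
  | succ m ih =>
      show evalL ξ (T _ * gaussBinom m (m+1) + T _ * gaussBinom m m) = 1
      rw [gaussBinom_zero_of_lt (by omega), mul_zero, evalL_add, evalL_zero, zero_add]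
      show evalL ξ (T (-((m:ℤ) - m)) * _) = 1
      rw [sub_self, neg_zero]
      rw [show (T 0 : LaurentPolynomial ℤ) = 1 from T_zero, one_mul]
      exact ih

lemma evalG_rec (hξ0 : ξ ≠ 0) (n t : ℕ) :
    evalG ξ (n+1) (t+1) =
      ξ ^ ((t:ℤ)+1) * evalG ξ n (t+1) + ξ ^ (-((n:ℤ) - t)) * evalG ξ n t := by
  show evalL ξ (T _ * _ + T _ * _) = _
  rw [evalL_add, evalL_T_mul ξ hξ0, evalL_T_mul ξ hξ0]
  rfl

lemma evalG_recN (hξ0 : ξ ≠ 0) (n t : ℕ) :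
    ξ ^ n * evalG ξ (n+1) (t+1) =
      ξ ^ (n+t+1) * evalG ξ n (t+1) + ξ ^ t * evalG ξ n t := by
  rw [evalG_rec ξ hξ0 n t, mul_add]
  congr 1
  · rw [← mul_assoc, ← zpow_natCast ξ n, ← zpow_add₀ hξ0,
      show (n:ℤ) + ((t:ℤ)+1) = ((n+t+1 : ℕ) : ℤ) by push_cast; ring, zpow_natCast]
  · rw [← mul_assoc, ← zpow_natCast ξ n, ← zpow_add₀ hξ0,
      show (n:ℤ) + (-((n:ℤ) - t)) = ((t : ℕ) : ℤ) by push_cast; ring, zpow_natCast]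

lemma Cp (hξ0 : ξ ≠ 0) : ∀ m t : ℕ,
    (ξ^(m+2*t+2) - ξ^m) * evalG ξ m (t+1) = (ξ^(2*m+1) - ξ^(2*t+1)) * evalG ξ m t := by
  intro m
  induction m with
  | zero =>
      intro t
      cases t with
      | zero => simp [evalG, gaussBinom, evalL_zero, evalL_one]
      | succ t =>
          rw [evalG_zero_of_lt ξ (by omega), evalG_zero_of_lt ξ (by omega)]
          ring
  | succ m ih =>
      intro t
      cases t with
      | zero =>
          have R2 := evalG_recN ξ hξ0 m 0
          have I2 := ih 0
          rw [evalG_zero_right] at R2 I2 ⊢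
          apply mul_left_cancel₀ (pow_ne_zero m hξ0)
          linear_combination (ξ^(m+3) - ξ^(m+1)) * R2 + ξ^(m+2) * I2
      | succ t =>
          have R1 := evalG_recN ξ hξ0 m (t+1)
          have R2 := evalG_recN ξ hξ0 m t
          have I1 := ih (t+1)
          have I2 := ih t
          apply mul_left_cancel₀ (pow_ne_zero m hξ0)
          linear_combination (ξ^(m+2*t+5) - ξ^(m+1)) * R1 + ξ^(m+t+3) * I1
            - (ξ^(2*m+3) - ξ^(2*t+3)) * R2 + ξ^(t+2) * I2

section Root

variable {ℓ : ℕ} {ξ : ℂ}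

lemma sq_ne_one (hξ : IsPrimitiveRoot ξ ℓ) (hℓ : 1 < ℓ) (hodd : Odd ℓ) : ξ^2 ≠ 1 := by
  intro h
  have hd := (hξ.pow_eq_one_iff_dvd 2).mp h
  have h2 : ℓ ≤ 2 := Nat.le_of_dvd (by norm_num) hd
  obtain ⟨j, hj⟩ := hodd
  omega

lemma pow2m_ne_one (hξ : IsPrimitiveRoot ξ ℓ) (hodd : Odd ℓ) {m : ℕ} (h : ¬ ℓ ∣ m) :
    ξ^(2*m) ≠ 1 := by
  intro he
  have hd := (hξ.pow_eq_one_iff_dvd (2*m)).mp he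
  exact h ((Nat.coprime_two_right.mpr hodd).dvd_of_dvd_mul_left hd)

lemma evalG_one_eq_zero_iff (hξ : IsPrimitiveRoot ξ ℓ) (hℓ : 1 < ℓ) (hodd : Odd ℓ) (m : ℕ) :
    evalG ξ m 1 = 0 ↔ ℓ ∣ m := by
  have hξ0 : ξ ≠ 0 := hξ.ne_zero (by omega)
  have key := Cp ξ hξ0 m 0
  rw [evalG_zero_right, mul_one] at key
  have hf : ξ^(m+2) - ξ^m ≠ 0 := by
    intro h
    apply sq_ne_one hξ hℓ hodd
    have h' : ξ^m * ξ^2 = ξ^m * 1 := by linear_combination h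
    exact mul_left_cancel₀ (pow_ne_zero m hξ0) h'
  constructor
  · intro h0
    rw [show (0:ℕ)+1 = 1 from rfl] at key
    rw [h0, mul_zero] at key
    have h1 : ξ^(2*m) * ξ = 1 * ξ := by linear_combination -key
    have h2 : ξ^(2*m) = 1 := mul_right_cancel₀ hξ0 h1
    have hd := (hξ.pow_eq_one_iff_dvd (2*m)).mp h2
    exact (Nat.coprime_two_right.mpr hodd).dvd_of_dvd_mul_left hd
  · intro hd
    have hm : ξ^m = 1 := (hξ.pow_eq_one_iff_dvd m).mpr hd
    have h1 : ξ^(2*m+1) - ξ^(2*0+1) = 0 := by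
      have : ξ^(2*m+1) = (ξ^m) * (ξ^m) * ξ := by ring
      rw [this, hm]; ring
    rw [h1] at key
    rcases mul_eq_zero.mp key with h | h
    · exact absurd h hf
    · exact h

lemma evalG_ell_eq_zero (hξ : IsPrimitiveRoot ξ ℓ) (hℓ : 1 < ℓ) (hodd : Odd ℓ) :
    ∀ t : ℕ, 0 < t → t < ℓ → evalG ξ ℓ t = 0 := by
  have hξ0 : ξ ≠ 0 := hξ.ne_zero (by omega)
  have hXl : ξ^ℓ = 1 := hξ.pow_eq_one
  intro t
  induction t with
  | zero => omega
  | succ t ih =>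
      intro _ htl
      have key := Cp ξ hξ0 ℓ t
      have hfact : ξ^(ℓ+2*t+2) - ξ^ℓ = ξ^(2*(t+1)) - 1 := by
        rw [show ℓ+2*t+2 = ℓ + 2*(t+1) by ring, pow_add, hXl, one_mul]
      have hnz : ξ^(2*(t+1)) - 1 ≠ 0 := by
        intro h
        exact pow2m_ne_one hξ hodd
          (by intro hdd; exact absurd (Nat.le_of_dvd (by omega) hdd) (by omega))
          (sub_eq_zero.mp h)
      cases Nat.eq_zero_or_pos t with
      | inl h0 =>
          subst h0
          rw [evalG_zero_right, mul_one] at key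
          have hr : ξ^(2*ℓ+1) - ξ^(2*0+1) = 0 := by
            have : ξ^(2*ℓ+1) = (ξ^ℓ) * (ξ^ℓ) * ξ := by ring
            rw [this, hXl]; ring
          rw [hfact] at key
          rw [hr] at key
          rcases mul_eq_zero.mp key with h | h
          · exact absurd h hnz
          · exact h
      | inr hpos =>
          rw [ih hpos (by omega), mul_zero, hfact] at key
          rcases mul_eq_zero.mp key with h | h
          · exact absurd h hnz
          · exact h

end Root

def gZ (ξ : ℂ) (m : ℕ) (t : ℤ) : ℂ := if 0 ≤ t then evalG ξ m t.toNat else 0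

lemma gZ_natCast (m t : ℕ) : gZ ξ m (t : ℤ) = evalG ξ m t := by
  simp [gZ]

lemma gZ_neg (m : ℕ) {t : ℤ} (ht : t < 0) : gZ ξ m t = 0 := by
  simp [gZ, not_le.mpr ht]

lemma gZ_zero_right (m : ℕ) : gZ ξ m 0 = 1 := by
  simpa using (gZ_natCast ξ m 0).trans (evalG_zero_right ξ m)

lemma gZ_recZ (hξ0 : ξ ≠ 0) (n : ℕ) {t : ℤ} (ht : 1 ≤ t) :
    gZ ξ (n+1) t = ξ^t * gZ ξ n t + ξ^(t-1-n) * gZ ξ n (t-1) := by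
  obtain ⟨s, rfl⟩ : ∃ s : ℕ, t = (s:ℤ)+1 := ⟨(t-1).toNat, by omega⟩
  have h1 : ((s:ℤ)+1) = ((s+1 : ℕ) : ℤ) := by push_cast; ring
  have h2 : ((s:ℤ)+1) - 1 = ((s:ℕ) : ℤ) := by ring
  have e1 : gZ ξ (n+1) ((s:ℤ)+1) = evalG ξ (n+1) (s+1) := by rw [h1, gZ_natCast]
  have e2 : gZ ξ n ((s:ℤ)+1) = evalG ξ n (s+1) := by rw [h1, gZ_natCast]
  have e3 : gZ ξ n ((s:ℤ)+1-1) = evalG ξ n s := by rw [h2, gZ_natCast]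
  rw [e1, e2, e3, evalG_rec ξ hξ0 n s,
    show ((s:ℤ)+1-1-(n:ℤ)) = -((n:ℤ) - s) by ring]

section Lucas

variable {ℓ : ℕ} {ξ : ℂ}

lemma zpow_sub_ell (hξ : IsPrimitiveRoot ξ ℓ) (hℓ : 1 < ℓ) (u : ℤ) :
    ξ ^ (u - (ℓ:ℤ)) = ξ ^ u := by
  have hξ0 : ξ ≠ 0 := hξ.ne_zero (by omega)
  have hXl : ξ ^ (ℓ:ℤ) = 1 := by rw [zpow_natCast, hξ.pow_eq_one]
  rw [zpow_sub₀ hξ0, hXl, div_one]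

lemma gZ_shift (hξ : IsPrimitiveRoot ξ ℓ) (hℓ : 1 < ℓ) (hodd : Odd ℓ) :
    ∀ (m : ℕ) (t : ℤ), gZ ξ (m + ℓ) t = gZ ξ m t + gZ ξ m (t - ℓ) := by
  have hξ0 : ξ ≠ 0 := hξ.ne_zero (by omega)
  have hXl : ξ ^ (ℓ:ℤ) = 1 := by rw [zpow_natCast, hξ.pow_eq_one]
  intro m
  induction m with
  | zero =>
      intro t
      rcases lt_or_ge t 0 with h0 | h0
      · rw [gZ_neg ξ _ h0, gZ_neg ξ _ h0, gZ_neg ξ _ (by omega), add_zero]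
      · lift t to ℕ using h0 with s
        rw [zero_add, gZ_natCast, gZ_natCast]
        rcases lt_trichotomy s ℓ with hs | hs | hs
        · have h2 : gZ ξ 0 ((s:ℤ) - ℓ) = 0 := gZ_neg ξ _ (by omega)
          rw [h2, add_zero]
          rcases Nat.eq_zero_or_pos s with h3 | h3
          · subst h3; rw [evalG_zero_right, evalG_zero_right]
          · rw [evalG_ell_eq_zero hξ hℓ hodd s h3 hs, evalG_zero_of_lt ξ h3]
        · subst hs
          rw [sub_self, gZ_zero_right, evalG_diag, evalG_zero_of_lt ξ (by omega), zero_add]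
        · have h2 : ((s:ℤ) - ℓ) = ((s - ℓ : ℕ) : ℤ) := by push_cast [Nat.cast_sub hs.le]; ring
          rw [h2, gZ_natCast, evalG_zero_of_lt ξ hs, evalG_zero_of_lt ξ (by omega),
            evalG_zero_of_lt ξ (by omega)]
          ring
  | succ m ih =>
      intro t
      rcases lt_trichotomy t 0 with h0 | h0 | h0
      · rw [gZ_neg ξ _ h0, gZ_neg ξ _ h0, gZ_neg ξ _ (by omega), add_zero]
      · subst h0
        rw [gZ_zero_right, gZ_zero_right, gZ_neg ξ _ (by omega), add_zero]
      · have ht : 1 ≤ t := h0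
        have e1 : m + 1 + ℓ = (m + ℓ) + 1 := by ring
        have hz : ξ ^ (t - 1 - ((m+ℓ:ℕ):ℤ)) = ξ ^ (t - 1 - (m:ℕ)) := by
          rw [show t - 1 - ((m+ℓ:ℕ):ℤ) = (t - 1 - (m:ℕ)) - ℓ by push_cast; ring,
            zpow_sub_ell hξ hℓ]
        rw [e1, gZ_recZ ξ hξ0 (m+ℓ) ht, ih t, ih (t-1), gZ_recZ ξ hξ0 m ht, hz]
        rcases lt_trichotomy (t - (ℓ:ℤ)) 0 with hc | hc | hc
        · rw [gZ_neg ξ (m+1) hc, gZ_neg ξ m hc,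
            gZ_neg ξ m (show t - 1 - (ℓ:ℤ) < 0 by omega)]
          ring
        · have htl : t = (ℓ:ℤ) := by omega
          have hneg : t - 1 - (ℓ:ℤ) < 0 := by omega
          rw [gZ_neg ξ m hneg, hc, gZ_zero_right, gZ_zero_right, htl, hXl]
          ring
        · rw [gZ_recZ ξ hξ0 m (show (1:ℤ) ≤ t - ℓ by omega)]
          have z1 : ξ ^ (t - (ℓ:ℤ)) = ξ ^ t := by
            rw [show t - (ℓ:ℤ) = t - ℓ by ring, zpow_sub_ell hξ hℓ]
          have z2 : ξ ^ (t - (ℓ:ℤ) - 1 - m) = ξ ^ (t - 1 - (m:ℕ)) := by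
            rw [show t - (ℓ:ℤ) - 1 - m = (t - 1 - (m:ℕ)) - ℓ by ring, zpow_sub_ell hξ hℓ]
          rw [z1, z2, show t - (ℓ:ℤ) - 1 = t - 1 - ℓ by ring]
          ring

lemma gZ_lucasA (hξ : IsPrimitiveRoot ξ ℓ) (hℓ : 1 < ℓ) (hodd : Odd ℓ) :
    ∀ (a : ℕ) (t : ℤ), ¬ ((ℓ:ℤ) ∣ t) → gZ ξ (a * ℓ) t = 0 := by
  intro a
  induction a with
  | zero =>
      intro t htd
      have ht0 : t ≠ 0 := by rintro rfl; exact htd (dvd_zero _)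
      rcases lt_or_ge t 0 with h0 | h0
      · exact gZ_neg ξ _ h0
      · lift t to ℕ using h0
        rw [zero_mul, gZ_natCast]
        exact evalG_zero_of_lt ξ (by omega)
  | succ a ih =>
      intro t htd
      rw [show (a+1) * ℓ = a * ℓ + ℓ by ring, gZ_shift hξ hℓ hodd, ih t htd,
        ih (t - ℓ) (by
          intro hd
          apply htd
          have := hd.add (dvd_refl (ℓ:ℤ))
          simpa using this)]
      ring

lemma evalG_lucasA (hξ : IsPrimitiveRoot ξ ℓ) (hℓ : 1 < ℓ) (hodd : Odd ℓ)
    {m t : ℕ} (hm : ℓ ∣ m) (ht : ¬ ℓ ∣ t) : evalG ξ m t = 0 := by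
  obtain ⟨c, rfl⟩ := hm
  rw [← gZ_natCast, show ℓ * c = c * ℓ by ring]
  exact gZ_lucasA hξ hℓ hodd c (t:ℤ) (by
    intro hd
    exact ht (Int.ofNat_dvd.mp hd))

lemma evalG_lucasB (hξ : IsPrimitiveRoot ξ ℓ) (hℓ : 1 < ℓ) (hodd : Odd ℓ) :
    ∀ (a s : ℕ), s < ℓ → evalG ξ (a * ℓ + s) ℓ = (a : ℂ) := by
  intro a
  induction a with
  | zero =>
      intro s hs
      rw [zero_mul, zero_add]
      rw [evalG_zero_of_lt ξ hs]
      norm_num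
  | succ a ih =>
      intro s hs
      have e1 : (a+1) * ℓ + s = (a * ℓ + s) + ℓ := by ring
      rw [e1, ← gZ_natCast, gZ_shift hξ hℓ hodd, sub_self, gZ_zero_right, gZ_natCast,
        ih s hs]
      push_cast
      ring

end Lucas


section Ops

variable (μ : ℕ)

lemma EdOp_apply (a : ℕ) (x : WeylC μ) (j : Fin (μ+1)) :
    EdOp ξ μ a x j =
      if h : (j:ℕ) + a ≤ μ then
        evalG ξ (μ - j) a * x ⟨(j:ℕ) + a, by omega⟩
      else 0 := by
  classical
  induction x using Finsupp.induction_linear with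
  | zero => simp
  | add f g ihf ihg =>
      rw [map_add, Finsupp.add_apply, ihf, ihg]
      split <;> simp [Finsupp.add_apply] <;> ring
  | single n c =>
      have hEs : EdOp ξ μ a (Finsupp.single n c) =
          c • (if a ≤ (n : ℕ) then
            evalG ξ (μ - n + a) a •
              Finsupp.single (⟨(n : ℕ) - a,
                lt_of_le_of_lt (Nat.sub_le _ _) n.isLt⟩ : Fin (μ+1)) (1:ℂ)
          else 0) := by
        rw [EdOp, Finsupp.lift_apply, Finsupp.sum_single_index (by simp)]
        rfl
      rw [hEs]
      by_cases han : a ≤ (n : ℕ)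
      · rw [if_pos han]
        by_cases hjm : (j:ℕ) + a ≤ μ
        · rw [dif_pos hjm]
          rw [Finsupp.smul_apply, Finsupp.smul_apply, Finsupp.single_apply,
            Finsupp.single_apply]
          by_cases hn : (n:ℕ) = (j:ℕ) + a
          · have h1 : (⟨(n:ℕ) - a, lt_of_le_of_lt (Nat.sub_le _ _) n.isLt⟩ : Fin (μ+1)) = j := by
              apply Fin.ext; simp only []; omega
            have h2 : n = (⟨(j:ℕ) + a, by omega⟩ : Fin (μ+1)) := by
              apply Fin.ext; simp only []; omega
            rw [if_pos h1, if_pos h2]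
            have h3 : μ - (n:ℕ) + a = μ - (j:ℕ) := by omega
            rw [h3, smul_eq_mul, smul_eq_mul]
            ring
          · have h1 : ¬ ((⟨(n:ℕ) - a, lt_of_le_of_lt (Nat.sub_le _ _) n.isLt⟩ : Fin (μ+1)) = j) := by
              intro h; apply hn
              have := Fin.mk.injEq ((n:ℕ) - a) _ (j:ℕ) _ ▸ h
              have : (n:ℕ) - a = (j:ℕ) := by rw [← this]
              omega
            have h2 : ¬ (n = (⟨(j:ℕ) + a, by omega⟩ : Fin (μ+1))) := by
              intro h; apply hn; rw [h]
            rw [if_neg h1, if_neg h2]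
            simp
        · rw [dif_neg hjm]
          rw [Finsupp.smul_apply, Finsupp.smul_apply, Finsupp.single_apply]
          have h1 : ¬ ((⟨(n:ℕ) - a, lt_of_le_of_lt (Nat.sub_le _ _) n.isLt⟩ : Fin (μ+1)) = j) := by
            intro h
            have h' : (n:ℕ) - a = (j:ℕ) := by rw [← h]
            have := n.isLt
            omega
          rw [if_neg h1]
          simp
      · rw [if_neg han, smul_zero, Finsupp.zero_apply]
        split
        · rw [Finsupp.single_apply]
          have h2 : ¬ (n = (⟨(j:ℕ) + a, by omega⟩ : Fin (μ+1))) := by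
            intro h
            apply han
            have : (n:ℕ) = (j:ℕ) + a := by rw [h]
            omega
          rw [if_neg h2, mul_zero]
        · rfl

lemma FdOp_apply (b : ℕ) (x : WeylC μ) (j : Fin (μ+1)) :
    FdOp ξ μ b x j =
      if h : b ≤ (j:ℕ) then
        evalG ξ (j:ℕ) b * x ⟨(j:ℕ) - b, by omega⟩
      else 0 := by
  classical
  induction x using Finsupp.induction_linear with
  | zero => simp
  | add f g ihf ihg =>
      rw [map_add, Finsupp.add_apply, ihf, ihg]
      split <;> simp [Finsupp.add_apply] <;> ring
  | single n c =>
      have hFs : FdOp ξ μ b (Finsupp.single n c) =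
          c • (if h : (n : ℕ) + b ≤ μ then
            evalG ξ ((n:ℕ) + b) b •
              Finsupp.single (⟨(n : ℕ) + b, Nat.lt_succ_of_le h⟩ : Fin (μ+1)) (1:ℂ)
          else 0) := by
        rw [FdOp, Finsupp.lift_apply, Finsupp.sum_single_index (by simp)]
        rfl
      rw [hFs]
      by_cases hnb : (n:ℕ) + b ≤ μ
      · rw [dif_pos hnb]
        by_cases hbj : b ≤ (j:ℕ)
        · rw [dif_pos hbj]
          rw [Finsupp.smul_apply, Finsupp.smul_apply, Finsupp.single_apply,
            Finsupp.single_apply]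
          by_cases hn : (n:ℕ) = (j:ℕ) - b
          · have h1 : (⟨(n:ℕ) + b, Nat.lt_succ_of_le hnb⟩ : Fin (μ+1)) = j := by
              apply Fin.ext; simp only []; omega
            have h2 : n = (⟨(j:ℕ) - b, by omega⟩ : Fin (μ+1)) := by
              apply Fin.ext; simp only []; omega
            rw [if_pos h1, if_pos h2]
            have h3 : (n:ℕ) + b = (j:ℕ) := by
              have := h1
              have h' : (n:ℕ) + b = (j:ℕ) := by rw [← h1]
              exact h'
            rw [h3, smul_eq_mul, smul_eq_mul]
            ring
          · have h1 : ¬ ((⟨(n:ℕ) + b, Nat.lt_succ_of_le hnb⟩ : Fin (μ+1)) = j) := by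
              intro h
              apply hn
              have h' : (n:ℕ) + b = (j:ℕ) := by rw [← h]
              omega
            have h2 : ¬ (n = (⟨(j:ℕ) - b, by omega⟩ : Fin (μ+1))) := by
              intro h
              apply hn; rw [h]
            rw [if_neg h1, if_neg h2]
            simp
        · rw [dif_neg hbj]
          rw [Finsupp.smul_apply, Finsupp.smul_apply, Finsupp.single_apply]
          have h1 : ¬ ((⟨(n:ℕ) + b, Nat.lt_succ_of_le hnb⟩ : Fin (μ+1)) = j) := by
            intro h
            have h' : (n:ℕ) + b = (j:ℕ) := by rw [← h]
            omega
          rw [if_neg h1]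
          simp
      · rw [dif_neg hnb, smul_zero, Finsupp.zero_apply]
        split
        · rw [Finsupp.single_apply]
          have h2 : ¬ (n = (⟨(j:ℕ) - b, by omega⟩ : Fin (μ+1))) := by
            intro h
            apply hnb
            have h' : (n:ℕ) = (j:ℕ) - b := by rw [h]
            omega
          rw [if_neg h2, mul_zero]
        · rfl

end Ops

section Pows

variable (μ : ℕ)

lemma EdOp_pow_apply (a p : ℕ) (x : WeylC μ) (j : Fin (μ+1)) :
    ((EdOp ξ μ a ^ p) x) j =
      if h : (j:ℕ) + p*a ≤ μ then
        (∏ i ∈ Finset.range p, evalG ξ (μ - (j:ℕ) - i*a) a) * x ⟨(j:ℕ) + p*a, by omega⟩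
      else 0 := by
  induction p generalizing x with
  | zero =>
      simp only [pow_zero, Module.End.one_apply, Finset.range_zero, Finset.prod_empty, one_mul]
      rw [dif_pos (by omega : (j:ℕ) + 0*a ≤ μ)]
      congr 1
      apply Fin.ext
      simp
  | succ p ih =>
      have hmul : (p+1)*a = p*a + a := by ring
      rw [pow_succ, Module.End.mul_apply, ih (EdOp ξ μ a x)]
      by_cases h : (j:ℕ) + (p+1)*a ≤ μ
      · have hp : (j:ℕ) + p*a ≤ μ := by omega
        rw [dif_pos hp, dif_pos h, EdOp_apply, Finset.prod_range_succ]
        rw [dif_pos (show ((⟨(j:ℕ) + p*a, by omega⟩ : Fin (μ+1)) : ℕ) + a ≤ μ by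
          simp only [Fin.val_mk]; omega)]
        have e1 : μ - ((⟨(j:ℕ) + p*a, by omega⟩ : Fin (μ+1)) : ℕ) = μ - (j:ℕ) - p*a := by
          simp only [Fin.val_mk]; omega
        have e2 : ((⟨(j:ℕ) + p*a, by omega⟩ : Fin (μ+1)) : ℕ) + a = (j:ℕ) + (p+1)*a := by
          simp only [Fin.val_mk]; omega
        simp only [e1, e2]
        ring
      · rw [dif_neg h]
        by_cases hp : (j:ℕ) + p*a ≤ μ
        · rw [dif_pos hp, EdOp_apply]
          rw [dif_neg (show ¬ (((⟨(j:ℕ) + p*a, by omega⟩ : Fin (μ+1)) : ℕ) + a ≤ μ) by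
            simp only [Fin.val_mk]; omega)]
          rw [mul_zero]
        · rw [dif_neg hp]

lemma FdOp_pow_apply (b p : ℕ) (x : WeylC μ) (j : Fin (μ+1)) :
    ((FdOp ξ μ b ^ p) x) j =
      if h : p*b ≤ (j:ℕ) then
        (∏ i ∈ Finset.range p, evalG ξ ((j:ℕ) - i*b) b) * x ⟨(j:ℕ) - p*b, by omega⟩
      else 0 := by
  induction p generalizing x with
  | zero =>
      simp only [pow_zero, Module.End.one_apply, Finset.range_zero, Finset.prod_empty, one_mul]
      rw [dif_pos (by omega : 0*b ≤ (j:ℕ))]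
      congr 1
      apply Fin.ext
      simp
  | succ p ih =>
      have hmul : (p+1)*b = p*b + b := by ring
      rw [pow_succ, Module.End.mul_apply, ih (FdOp ξ μ b x)]
      by_cases h : (p+1)*b ≤ (j:ℕ)
      · have hp : p*b ≤ (j:ℕ) := by omega
        rw [dif_pos hp, dif_pos h, FdOp_apply, Finset.prod_range_succ]
        rw [dif_pos (show b ≤ ((⟨(j:ℕ) - p*b, by omega⟩ : Fin (μ+1)) : ℕ) by
          simp only [Fin.val_mk]; omega)]
        have e1 : ((⟨(j:ℕ) - p*b, by omega⟩ : Fin (μ+1)) : ℕ) = (j:ℕ) - p*b := by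
          simp only [Fin.val_mk]
        have e2 : ((⟨(j:ℕ) - p*b, by omega⟩ : Fin (μ+1)) : ℕ) - b = (j:ℕ) - (p+1)*b := by
          simp only [Fin.val_mk]; omega
        simp only [e2, e1]
        ring
      · rw [dif_neg h]
        by_cases hp : p*b ≤ (j:ℕ)
        · rw [dif_pos hp, FdOp_apply]
          rw [dif_neg (show ¬ (b ≤ ((⟨(j:ℕ) - p*b, by omega⟩ : Fin (μ+1)) : ℕ)) by
            simp only [Fin.val_mk]; omega)]
          rw [mul_zero]
        · rw [dif_neg hp]

end Pows

section Singles

variable (μ : ℕ)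

lemma EdOp_pow_single (a p n : ℕ) (hn : n < μ+1) (h : p*a ≤ n) :
    (EdOp ξ μ a ^ p) (Finsupp.single (⟨n, hn⟩ : Fin (μ+1)) (1:ℂ)) =
      (∏ i ∈ Finset.range p, evalG ξ (μ - (n - p*a) - i*a) a) •
        Finsupp.single (⟨n - p*a, by omega⟩ : Fin (μ+1)) (1:ℂ) := by
  ext j
  rw [EdOp_pow_apply, Finsupp.smul_apply, Finsupp.single_apply]
  by_cases hj : (⟨n - p*a, by omega⟩ : Fin (μ+1)) = j
  · have hjv : (j:ℕ) = n - p*a := by rw [← hj]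
    rw [if_pos hj, dif_pos (show (j:ℕ) + p*a ≤ μ by omega)]
    rw [Finsupp.single_apply,
      if_pos (Fin.ext (by simp only [Fin.val_mk]; omega) :
        (⟨n, hn⟩ : Fin (μ+1)) = ⟨(j:ℕ)+p*a, by omega⟩)]
    rw [hjv]
    simp
  · rw [if_neg hj]
    split
    · rw [Finsupp.single_apply, if_neg, mul_zero, smul_zero]
      intro he
      apply hj
      apply Fin.ext
      simp only [Fin.val_mk]
      have hv : n = (j:ℕ) + p*a := by
        have := congrArg Fin.val he
        simpa using this
      omega
    · rw [smul_zero]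

lemma FdOp_pow_single (b p n : ℕ) (hn : n < μ+1) (h : n + p*b ≤ μ) :
    (FdOp ξ μ b ^ p) (Finsupp.single (⟨n, hn⟩ : Fin (μ+1)) (1:ℂ)) =
      (∏ i ∈ Finset.range p, evalG ξ (n + p*b - i*b) b) •
        Finsupp.single (⟨n + p*b, by omega⟩ : Fin (μ+1)) (1:ℂ) := by
  ext j
  rw [FdOp_pow_apply, Finsupp.smul_apply, Finsupp.single_apply]
  by_cases hj : (⟨n + p*b, by omega⟩ : Fin (μ+1)) = j
  · have hjv : (j:ℕ) = n + p*b := by rw [← hj]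
    rw [if_pos hj, dif_pos (show p*b ≤ (j:ℕ) by omega)]
    rw [Finsupp.single_apply,
      if_pos (Fin.ext (by simp only [Fin.val_mk]; omega) :
        (⟨n, hn⟩ : Fin (μ+1)) = ⟨(j:ℕ) - p*b, by omega⟩)]
    rw [hjv]
    simp
  · rw [if_neg hj]
    split
    · rename_i hcond
      rw [Finsupp.single_apply, if_neg, mul_zero, smul_zero]
      intro he
      apply hj
      apply Fin.ext
      simp only [Fin.val_mk]
      have hv : n = (j:ℕ) - p*b := by
        have := congrArg Fin.val he
        simpa using this
      omega
    · rw [smul_zero]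

lemma memE {ξ : ℂ} {μ : ℕ} {N : Submodule ℂ (WeylC μ)} (hN : IsUSubmodule ξ μ N)
    (a p : ℕ) : ∀ x ∈ N, (EdOp ξ μ a ^ p) x ∈ N := by
  induction p with
  | zero => intro x hx; simpa using hx
  | succ p ih =>
      intro x hx
      rw [pow_succ, Module.End.mul_apply]
      exact ih _ ((hN a x hx).1)

lemma memF {ξ : ℂ} {μ : ℕ} {N : Submodule ℂ (WeylC μ)} (hN : IsUSubmodule ξ μ N)
    (b p : ℕ) : ∀ x ∈ N, (FdOp ξ μ b ^ p) x ∈ N := by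
  induction p with
  | zero => intro x hx; simpa using hx
  | succ p ih =>
      intro x hx
      rw [pow_succ, Module.End.mul_apply]
      exact ih _ ((hN b x hx).2)

lemma smul_cancel_mem {μ : ℕ} {N : Submodule ℂ (WeylC μ)} {c : ℂ} (hc : c ≠ 0)
    {v : WeylC μ} (h : c • v ∈ N) : v ∈ N := by
  have := N.smul_mem c⁻¹ h
  rwa [smul_smul, inv_mul_cancel₀ hc, one_smul] at this

end Singles

section Reach

variable {ℓ k : ℕ} {ξ : ℂ}

lemma reach_top (hodd : Odd ℓ) (hℓ : 1 < ℓ) (hk : 0 < k) (hξ : IsPrimitiveRoot ξ ℓ)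
    {N' : Submodule ℂ (WeylC (k*ℓ))} (hN' : IsUSubmodule ξ (k*ℓ) N')
    {x : WeylC (k*ℓ)} (hxN : x ∈ N') (hx0 : x ≠ 0)
    (hxS : ∀ j : Fin (k*ℓ+1), x j ≠ 0 → ¬ ℓ ∣ (j:ℕ)) :
    Finsupp.single (⟨k*ℓ - 1, by omega⟩ : Fin (k*ℓ+1)) (1:ℂ) ∈ N' := by
  classical
  have hcomm : k*ℓ = ℓ*k := Nat.mul_comm _ _
  have hdvdμ : ℓ ∣ k*ℓ := ⟨k, hcomm⟩
  have hkl : (k-1)*ℓ + ℓ = k*ℓ := by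
    have h1 : (k-1) + 1 = k := by omega
    calc (k-1)*ℓ + ℓ = ((k-1)+1)*ℓ := by ring
    _ = k*ℓ := by rw [h1]
  obtain ⟨n₀, hn₀⟩ := Finsupp.support_nonempty_iff.mpr hx0
  have hxn₀ : x n₀ ≠ 0 := Finsupp.mem_support_iff.mp hn₀
  have hnd : ¬ ℓ ∣ (n₀:ℕ) := hxS n₀ hxn₀
  set r₀ := (n₀:ℕ) % ℓ with hr₀def
  set q := (n₀:ℕ) / ℓ with hqdef
  have hdm : ℓ * q + r₀ = (n₀:ℕ) := Nat.div_add_mod _ _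
  have hr₀pos : 1 ≤ r₀ := by
    rcases Nat.eq_zero_or_pos r₀ with h | h
    · exact absurd (Nat.dvd_of_mod_eq_zero h) hnd
    · exact h
  have hr₀lt : r₀ < ℓ := Nat.mod_lt _ (by omega)
  have hn₀le : (n₀:ℕ) ≤ k*ℓ := by have := n₀.isLt; omega
  have hqk : q + 1 ≤ k := by
    by_contra h
    push_neg at h
    have : ℓ * k ≤ ℓ * q := Nat.mul_le_mul_left ℓ (by omega)
    omega
  have hq : ℓ * q + ℓ ≤ ℓ * k := by
    calc ℓ*q + ℓ = ℓ*(q+1) := by ring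
    _ ≤ ℓ*k := Nat.mul_le_mul_left ℓ hqk
  have hqℓ : q*ℓ = ℓ*q := Nat.mul_comm _ _
  -- stage 1a : y = E^(r₀-1) x
  set y := (EdOp ξ (k*ℓ) 1 ^ (r₀ - 1)) x with hydef
  have hyN : y ∈ N' := memE hN' 1 (r₀-1) x hxN
  have hY1 : ∀ j : Fin (k*ℓ+1), y j ≠ 0 → ¬ ℓ ∣ (j:ℕ) := by
    intro j hyj hdvd
    rw [hydef, EdOp_pow_apply] at hyj
    by_cases hc : (j:ℕ) + (r₀-1)*1 ≤ k*ℓ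
    swap
    · rw [dif_neg hc] at hyj; exact hyj rfl
    rw [dif_pos hc] at hyj
    have hprod := left_ne_zero_of_mul hyj
    have hxval := right_ne_zero_of_mul hyj
    have hnd2 : ¬ ℓ ∣ ((j:ℕ) + (r₀-1)*1) := by
      have := hxS _ hxval
      simpa using this
    by_cases hr1 : r₀ = 1
    · apply hnd2
      have : (j:ℕ) + (r₀-1)*1 = (j:ℕ) := by omega
      rw [this]; exact hdvd
    · apply hprod
      apply Finset.prod_eq_zero (Finset.mem_range.mpr (show 0 < r₀ - 1 by omega))
      apply (evalG_one_eq_zero_iff hξ hℓ hodd _).mpr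
      have harg : k*ℓ - (j:ℕ) - 0*1 = k*ℓ - (j:ℕ) := by omega
      rw [harg]
      exact Nat.dvd_sub hdvdμ hdvd
  have hyval : ∀ j : Fin (k*ℓ+1), (j:ℕ) = ℓ*q + 1 → y j ≠ 0 := by
    intro j hj
    rw [hydef, EdOp_pow_apply, dif_pos (show (j:ℕ) + (r₀-1)*1 ≤ k*ℓ by omega)]
    apply mul_ne_zero
    · rw [Finset.prod_ne_zero_iff]
      intro i hi
      rw [Finset.mem_range] at hi
      rw [Ne, evalG_one_eq_zero_iff hξ hℓ hodd]
      rw [hj]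
      intro hdd
      have h5 : (k*ℓ - (ℓ*q+1) - i*1) + (1+i) = k*ℓ - ℓ*q := by omega
      have h6 : ℓ ∣ k*ℓ - ℓ*q := Nat.dvd_sub hdvdμ ⟨q, rfl⟩
      have h6' : ℓ ∣ (k*ℓ - (ℓ*q+1) - i*1) + (1+i) := by rw [h5]; exact h6
      have h7 : ℓ ∣ (1+i) := (Nat.dvd_add_right hdd).mp h6'
      have := Nat.le_of_dvd (by omega) h7
      omega
    · convert hxn₀ using 2
      apply Fin.ext
      simp only [Fin.val_mk]
      omega
  -- stage 1b : z = F^(ℓ-2) y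
  set z := (FdOp ξ (k*ℓ) 1 ^ (ℓ-2)) y with hzdef
  have hzN : z ∈ N' := memF hN' 1 (ℓ-2) y hyN
  have hzval : ∀ j : Fin (k*ℓ+1), (j:ℕ) = ℓ*q + (ℓ-1) → z j ≠ 0 := by
    intro j hj
    rw [hzdef, FdOp_pow_apply, dif_pos (show (ℓ-2)*1 ≤ (j:ℕ) by omega)]
    apply mul_ne_zero
    · rw [Finset.prod_ne_zero_iff]
      intro i hi
      rw [Finset.mem_range] at hi
      rw [Ne, evalG_one_eq_zero_iff hξ hℓ hodd]
      rw [hj]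
      intro hdd
      have h1 : ℓ*q + (ℓ-1) - i*1 = ℓ*q + (ℓ-1-i) := by omega
      rw [h1] at hdd
      have h2 : ℓ ∣ (ℓ-1-i) := (Nat.dvd_add_right ⟨q, rfl⟩).mp hdd
      have := Nat.le_of_dvd (by omega) h2
      omega
    · apply hyval
      simp only [Fin.val_mk]
      omega
  have hZ1 : ∀ j : Fin (k*ℓ+1), z j ≠ 0 → (j:ℕ) % ℓ = ℓ - 1 := by
    intro j hzj
    rw [hzdef, FdOp_pow_apply] at hzj
    by_cases hc : (ℓ-2)*1 ≤ (j:ℕ)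
    swap
    · rw [dif_neg hc] at hzj; exact absurd rfl hzj
    rw [dif_pos hc] at hzj
    have hprod := left_ne_zero_of_mul hzj
    have hyv := right_ne_zero_of_mul hzj
    have hY' : ¬ ℓ ∣ ((j:ℕ) - (ℓ-2)*1) := by
      have := hY1 _ hyv
      simpa using this
    have hfac : ∀ i ∈ Finset.range (ℓ-2), ¬ ℓ ∣ ((j:ℕ) - i*1) := by
      intro i hi hdd
      exact hprod (Finset.prod_eq_zero hi ((evalG_one_eq_zero_iff hξ hℓ hodd _).mpr hdd))
    have hdm2 := Nat.div_add_mod (j:ℕ) ℓ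
    have hrlt : (j:ℕ) % ℓ < ℓ := Nat.mod_lt _ (by omega)
    by_contra hne
    by_cases hr2 : (j:ℕ) % ℓ = ℓ - 2
    · exact hY' ⟨(j:ℕ)/ℓ, by omega⟩
    · exact hfac ((j:ℕ) % ℓ) (Finset.mem_range.mpr (by omega)) ⟨(j:ℕ)/ℓ, by omega⟩
  -- stage 2a : zE = E^(q) z  (with a = ℓ)
  set zE := (EdOp ξ (k*ℓ) ℓ ^ q) z with hzEdef
  have hzEN : zE ∈ N' := memE hN' ℓ q z hzN
  have hzEval : ∀ j : Fin (k*ℓ+1), (j:ℕ) = ℓ - 1 → zE j ≠ 0 := by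
    intro j hj
    rw [hzEdef, EdOp_pow_apply, dif_pos (show (j:ℕ) + q*ℓ ≤ k*ℓ by omega)]
    apply mul_ne_zero
    · rw [Finset.prod_ne_zero_iff]
      intro i hi
      rw [Finset.mem_range] at hi
      have harg : k*ℓ - (j:ℕ) - i*ℓ = (k-1-i)*ℓ + 1 := by
        have e1 : (k-1-i)*ℓ + i*ℓ + ℓ = k*ℓ := by
          have h1 : (k-1-i) + i + 1 = k := by omega
          calc (k-1-i)*ℓ + i*ℓ + ℓ = ((k-1-i) + i + 1)*ℓ := by ring
          _ = k*ℓ := by rw [h1]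
        omega
      rw [harg, evalG_lucasB hξ hℓ hodd (k-1-i) 1 hℓ]
      simp only [Ne, Nat.cast_eq_zero]
      omega
    · apply hzval
      simp only [Fin.val_mk]
      omega
  have hzE1 : ∀ j : Fin (k*ℓ+1), zE j ≠ 0 → (j:ℕ) % ℓ = ℓ - 1 := by
    intro j hzej
    rw [hzEdef, EdOp_pow_apply] at hzej
    by_cases hc : (j:ℕ) + q*ℓ ≤ k*ℓ
    swap
    · rw [dif_neg hc] at hzej; exact absurd rfl hzej
    rw [dif_pos hc] at hzej
    have := hZ1 _ (right_ne_zero_of_mul hzej)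
    have h2 : ((j:ℕ) + q*ℓ) % ℓ = ℓ - 1 := by simpa using this
    rwa [Nat.add_mul_mod_self_right] at h2
  -- stage 2b : w = F^(k-1) zE  (with b = ℓ)
  set w := (FdOp ξ (k*ℓ) ℓ ^ (k-1)) zE with hwdef
  have hwN : w ∈ N' := memF hN' ℓ (k-1) zE hzEN
  have hwsupp : ∀ j : Fin (k*ℓ+1), w j ≠ 0 → j = (⟨k*ℓ - 1, by omega⟩ : Fin (k*ℓ+1)) := by
    intro j hwj
    rw [hwdef, FdOp_pow_apply] at hwj
    by_cases hc : (k-1)*ℓ ≤ (j:ℕ)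
    swap
    · rw [dif_neg hc] at hwj; exact absurd rfl hwj
    rw [dif_pos hc] at hwj
    have hmod : ((j:ℕ) - (k-1)*ℓ) % ℓ = ℓ - 1 := by
      have := hzE1 _ (right_ne_zero_of_mul hwj)
      simpa using this
    apply Fin.ext
    simp only [Fin.val_mk]
    have hjle : (j:ℕ) ≤ k*ℓ := by have := j.isLt; omega
    have hvle : (j:ℕ) - (k-1)*ℓ ≤ ℓ := by omega
    rcases Nat.lt_or_ge ((j:ℕ) - (k-1)*ℓ) ℓ with h | h
    · rw [Nat.mod_eq_of_lt h] at hmod; omega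
    · have hv : (j:ℕ) - (k-1)*ℓ = ℓ := by omega
      rw [hv, Nat.mod_self] at hmod; omega
  have hwval : w (⟨k*ℓ - 1, by omega⟩ : Fin (k*ℓ+1)) ≠ 0 := by
    rw [hwdef, FdOp_pow_apply,
      dif_pos (show (k-1)*ℓ ≤ ((⟨k*ℓ-1, by omega⟩ : Fin (k*ℓ+1)):ℕ) by
        simp only [Fin.val_mk]; omega)]
    apply mul_ne_zero
    · rw [Finset.prod_ne_zero_iff]
      intro i hi
      rw [Finset.mem_range] at hi
      have harg : ((⟨k*ℓ-1, by omega⟩ : Fin (k*ℓ+1)):ℕ) - i*ℓ = (k-1-i)*ℓ + (ℓ-1) := by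
        simp only [Fin.val_mk]
        have e1 : (k-1-i)*ℓ + i*ℓ + ℓ = k*ℓ := by
          have h1 : (k-1-i) + i + 1 = k := by omega
          calc (k-1-i)*ℓ + i*ℓ + ℓ = ((k-1-i) + i + 1)*ℓ := by ring
          _ = k*ℓ := by rw [h1]
        omega
      rw [harg, evalG_lucasB hξ hℓ hodd (k-1-i) (ℓ-1) (by omega)]
      simp only [Ne, Nat.cast_eq_zero]
      omega
    · apply hzEval
      simp only [Fin.val_mk]
      omega
  -- extract the single
  have hsingle : Finsupp.single (⟨k*ℓ - 1, by omega⟩ : Fin (k*ℓ+1)) (1:ℂ) =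
      (w (⟨k*ℓ - 1, by omega⟩ : Fin (k*ℓ+1)))⁻¹ • w := by
    ext j
    rw [Finsupp.smul_apply, Finsupp.single_apply]
    by_cases hj : (⟨k*ℓ-1, by omega⟩ : Fin (k*ℓ+1)) = j
    · rw [if_pos hj, ← hj, smul_eq_mul, inv_mul_cancel₀ hwval]
    · rw [if_neg hj]
      have hwj : w j = 0 := by
        by_contra h
        exact hj (hwsupp j h).symm
      rw [hwj, smul_zero]
  rw [hsingle]
  exact N'.smul_mem _ hwN

end Reach

section Reach2

variable {ℓ k : ℕ} {ξ : ℂ}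

lemma gen_singles (hodd : Odd ℓ) (hℓ : 1 < ℓ) (hk : 0 < k) (hξ : IsPrimitiveRoot ξ ℓ)
    {N' : Submodule ℂ (WeylC (k*ℓ))} (hN' : IsUSubmodule ξ (k*ℓ) N')
    (htop : Finsupp.single (⟨k*ℓ - 1, by omega⟩ : Fin (k*ℓ+1)) (1:ℂ) ∈ N') :
    ∀ (n : ℕ) (hn : n < k*ℓ+1), ¬ ℓ ∣ n →
      Finsupp.single (⟨n, hn⟩ : Fin (k*ℓ+1)) (1:ℂ) ∈ N' := by
  classical
  have hcomm : k*ℓ = ℓ*k := Nat.mul_comm _ _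
  have hdvdμ : ℓ ∣ k*ℓ := ⟨k, hcomm⟩
  have hkl : (k-1)*ℓ + ℓ = k*ℓ := by
    have h1 : (k-1) + 1 = k := by omega
    calc (k-1)*ℓ + ℓ = ((k-1)+1)*ℓ := by ring
    _ = k*ℓ := by rw [h1]
  intro n hn hnd
  set r := n % ℓ with hrdef
  set q := n / ℓ with hqdef
  have hdm : ℓ * q + r = n := Nat.div_add_mod _ _
  have hrpos : 1 ≤ r := by
    rcases Nat.eq_zero_or_pos r with h | h
    · exact absurd (Nat.dvd_of_mod_eq_zero h) hnd
    · exact h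
  have hrlt : r < ℓ := Nat.mod_lt _ (by omega)
  have hqk : q + 1 ≤ k := by
    by_contra h
    push_neg at h
    have : ℓ * k ≤ ℓ * q := Nat.mul_le_mul_left ℓ (by omega)
    omega
  have hq : ℓ * q + ℓ ≤ ℓ * k := by
    calc ℓ*q + ℓ = ℓ*(q+1) := by ring
    _ ≤ ℓ*k := Nat.mul_le_mul_left ℓ hqk
  have hqℓ : q*ℓ = ℓ*q := Nat.mul_comm _ _
  -- arithmetic for step A
  have hstepA : (k-1-q)*ℓ + ℓ*q = (k-1)*ℓ := by
    have h1 : (k-1-q) + q = k-1 := by omega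
    calc (k-1-q)*ℓ + ℓ*q = ((k-1-q) + q)*ℓ := by ring
    _ = (k-1)*ℓ := by rw [h1]
  have hcondA : (k-1-q)*ℓ ≤ k*ℓ - 1 := by omega
  -- step A: from top single down to ℓ*q + (ℓ-1)
  have hA := EdOp_pow_single ξ (k*ℓ) ℓ (k-1-q) (k*ℓ-1) (by omega) hcondA
  have hAmem := memE hN' ℓ (k-1-q) _ htop
  rw [hA] at hAmem
  have hAcoef : (∏ i ∈ Finset.range (k-1-q),
      evalG ξ (k*ℓ - (k*ℓ-1 - (k-1-q)*ℓ) - i*ℓ) ℓ) ≠ 0 := by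
    rw [Finset.prod_ne_zero_iff]
    intro i hi
    rw [Finset.mem_range] at hi
    have harg : k*ℓ - (k*ℓ-1 - (k-1-q)*ℓ) - i*ℓ = (k-1-q-i)*ℓ + 1 := by
      have e1 : (k-1-q-i)*ℓ + i*ℓ + q*ℓ + ℓ = k*ℓ := by
        have h1 : (k-1-q-i) + i + q + 1 = k := by omega
        calc (k-1-q-i)*ℓ + i*ℓ + q*ℓ + ℓ = ((k-1-q-i) + i + q + 1)*ℓ := by ring
        _ = k*ℓ := by rw [h1]
      omega
    rw [harg, evalG_lucasB hξ hℓ hodd (k-1-q-i) 1 hℓ]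
    simp only [Ne, Nat.cast_eq_zero]
    omega
  have hAmem2 := smul_cancel_mem hAcoef hAmem
  -- step B: from ℓ*q + (ℓ-1) down to n
  have hval1 : k*ℓ-1 - (k-1-q)*ℓ = ℓ*q + (ℓ-1) := by omega
  have hcondB : (ℓ-1-r)*1 ≤ k*ℓ-1 - (k-1-q)*ℓ := by omega
  have hB := EdOp_pow_single ξ (k*ℓ) 1 (ℓ-1-r) (k*ℓ-1 - (k-1-q)*ℓ) (by omega) hcondB
  have hBmem := memE hN' 1 (ℓ-1-r) _ hAmem2
  rw [hB] at hBmem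
  have hBcoef : (∏ i ∈ Finset.range (ℓ-1-r),
      evalG ξ (k*ℓ - (k*ℓ-1 - (k-1-q)*ℓ - (ℓ-1-r)*1) - i*1) 1) ≠ 0 := by
    rw [Finset.prod_ne_zero_iff]
    intro i hi
    rw [Finset.mem_range] at hi
    rw [Ne, evalG_one_eq_zero_iff hξ hℓ hodd]
    intro hdd
    have h5 : (k*ℓ - (k*ℓ-1 - (k-1-q)*ℓ - (ℓ-1-r)*1) - i*1) + (r+i) = k*ℓ - ℓ*q := by omega
    have h6 : ℓ ∣ k*ℓ - ℓ*q := Nat.dvd_sub hdvdμ ⟨q, rfl⟩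
    have h6' : ℓ ∣ (k*ℓ - (k*ℓ-1 - (k-1-q)*ℓ - (ℓ-1-r)*1) - i*1) + (r+i) := by
      rw [h5]; exact h6
    have h7 : ℓ ∣ (r+i) := (Nat.dvd_add_right hdd).mp h6'
    have := Nat.le_of_dvd (by omega) h7
    omega
  have hBmem2 := smul_cancel_mem hBcoef hBmem
  have hfin : (⟨k*ℓ-1 - (k-1-q)*ℓ - (ℓ-1-r)*1, by omega⟩ : Fin (k*ℓ+1)) = ⟨n, hn⟩ := by
    apply Fin.ext
    simp only [Fin.val_mk]
    omega
  rwa [hfin] at hBmem2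

lemma reach_mult (hodd : Odd ℓ) (hℓ : 1 < ℓ) (hk : 0 < k) (hξ : IsPrimitiveRoot ξ ℓ)
    {N' : Submodule ℂ (WeylC (k*ℓ))} (hN' : IsUSubmodule ξ (k*ℓ) N')
    {x : WeylC (k*ℓ)} (hxN : x ∈ N') (hx0 : x ≠ 0)
    (hxM : ∀ j : Fin (k*ℓ+1), x j ≠ 0 → ℓ ∣ (j:ℕ)) :
    ∀ (n : ℕ) (hn : n < k*ℓ+1), ℓ ∣ n →
      Finsupp.single (⟨n, hn⟩ : Fin (k*ℓ+1)) (1:ℂ) ∈ N' := by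
  classical
  have hcomm : k*ℓ = ℓ*k := Nat.mul_comm _ _
  obtain ⟨m₀, hm₀⟩ := Finsupp.support_nonempty_iff.mpr hx0
  have hxm₀ : x m₀ ≠ 0 := Finsupp.mem_support_iff.mp hm₀
  obtain ⟨q', hq'⟩ := hxM m₀ hxm₀
  have hm₀le : (m₀:ℕ) ≤ k*ℓ := by have := m₀.isLt; omega
  have hq'k : q' ≤ k := by
    by_contra h
    push_neg at h
    have h2 : ℓ * (k+1) ≤ ℓ * q' := Nat.mul_le_mul_left ℓ (by omega)
    have h3 : ℓ * (k+1) = ℓ*k + ℓ := by ring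
    omega
  have hq'ℓ : q'*ℓ = ℓ*q' := Nat.mul_comm _ _
  -- xE = E^(q') x with a = ℓ
  set xE := (EdOp ξ (k*ℓ) ℓ ^ q') x with hxEdef
  have hxEN : xE ∈ N' := memE hN' ℓ q' x hxN
  have hxEval : ∀ j : Fin (k*ℓ+1), (j:ℕ) = 0 → xE j ≠ 0 := by
    intro j hj
    rw [hxEdef, EdOp_pow_apply, dif_pos (show (j:ℕ) + q'*ℓ ≤ k*ℓ by omega)]
    apply mul_ne_zero
    · rw [Finset.prod_ne_zero_iff]
      intro i hi
      rw [Finset.mem_range] at hi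
      have harg : k*ℓ - (j:ℕ) - i*ℓ = (k-i)*ℓ + 0 := by
        have e1 : (k-i)*ℓ + i*ℓ = k*ℓ := by
          have h1 : (k-i) + i = k := by omega
          calc (k-i)*ℓ + i*ℓ = ((k-i) + i)*ℓ := by ring
          _ = k*ℓ := by rw [h1]
        omega
      rw [harg, evalG_lucasB hξ hℓ hodd (k-i) 0 (by omega)]
      simp only [Ne, Nat.cast_eq_zero]
      omega
    · convert hxm₀ using 2
      apply Fin.ext
      simp only [Fin.val_mk]
      omega
  -- w = F^k xE with b = ℓ
  set w := (FdOp ξ (k*ℓ) ℓ ^ k) xE with hwdef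
  have hwN : w ∈ N' := memF hN' ℓ k xE hxEN
  have hwsupp : ∀ j : Fin (k*ℓ+1), w j ≠ 0 → j = (⟨k*ℓ, by omega⟩ : Fin (k*ℓ+1)) := by
    intro j hwj
    rw [hwdef, FdOp_pow_apply] at hwj
    by_cases hc : k*ℓ ≤ (j:ℕ)
    swap
    · rw [dif_neg hc] at hwj; exact absurd rfl hwj
    apply Fin.ext
    simp only [Fin.val_mk]
    have := j.isLt
    omega
  have hwval : w (⟨k*ℓ, by omega⟩ : Fin (k*ℓ+1)) ≠ 0 := by
    rw [hwdef, FdOp_pow_apply,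
      dif_pos (show k*ℓ ≤ ((⟨k*ℓ, by omega⟩ : Fin (k*ℓ+1)):ℕ) by
        simp only [Fin.val_mk]; omega)]
    apply mul_ne_zero
    · rw [Finset.prod_ne_zero_iff]
      intro i hi
      rw [Finset.mem_range] at hi
      have harg : ((⟨k*ℓ, by omega⟩ : Fin (k*ℓ+1)):ℕ) - i*ℓ = (k-i)*ℓ + 0 := by
        simp only [Fin.val_mk]
        have e1 : (k-i)*ℓ + i*ℓ = k*ℓ := by
          have h1 : (k-i) + i = k := by omega
          calc (k-i)*ℓ + i*ℓ = ((k-i) + i)*ℓ := by ring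
          _ = k*ℓ := by rw [h1]
        omega
      rw [harg, evalG_lucasB hξ hℓ hodd (k-i) 0 (by omega)]
      simp only [Ne, Nat.cast_eq_zero]
      omega
    · apply hxEval
      simp only [Fin.val_mk]
      omega
  have hsingle : Finsupp.single (⟨k*ℓ, by omega⟩ : Fin (k*ℓ+1)) (1:ℂ) ∈ N' := by
    have heq : Finsupp.single (⟨k*ℓ, by omega⟩ : Fin (k*ℓ+1)) (1:ℂ) =
        (w (⟨k*ℓ, by omega⟩ : Fin (k*ℓ+1)))⁻¹ • w := by
      ext j
      rw [Finsupp.smul_apply, Finsupp.single_apply]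
      by_cases hj : (⟨k*ℓ, by omega⟩ : Fin (k*ℓ+1)) = j
      · rw [if_pos hj, ← hj, smul_eq_mul, inv_mul_cancel₀ hwval]
      · rw [if_neg hj]
        have hwj : w j = 0 := by
          by_contra h
          exact hj (hwsupp j h).symm
        rw [hwj, smul_zero]
    rw [heq]
    exact N'.smul_mem _ hwN
  -- now reach all multiples
  intro n hn hnd
  obtain ⟨qn, hqn⟩ := hnd
  have hqnk : qn ≤ k := by
    by_contra h
    push_neg at h
    have h2 : ℓ * (k+1) ≤ ℓ * qn := Nat.mul_le_mul_left ℓ (by omega)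
    have h3 : ℓ * (k+1) = ℓ*k + ℓ := by ring
    omega
  have hstep : (k-qn)*ℓ + ℓ*qn = k*ℓ := by
    have h1 : (k-qn) + qn = k := by omega
    calc (k-qn)*ℓ + ℓ*qn = ((k-qn) + qn)*ℓ := by ring
    _ = k*ℓ := by rw [h1]
  have hC := EdOp_pow_single ξ (k*ℓ) ℓ (k-qn) (k*ℓ) (by omega) (by omega)
  have hCmem := memE hN' ℓ (k-qn) _ hsingle
  rw [hC] at hCmem
  have hCcoef : (∏ i ∈ Finset.range (k-qn),
      evalG ξ (k*ℓ - (k*ℓ - (k-qn)*ℓ) - i*ℓ) ℓ) ≠ 0 := by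
    rw [Finset.prod_ne_zero_iff]
    intro i hi
    rw [Finset.mem_range] at hi
    have harg : k*ℓ - (k*ℓ - (k-qn)*ℓ) - i*ℓ = (k-qn-i)*ℓ + 0 := by
      have e1 : (k-qn-i)*ℓ + i*ℓ + ℓ*qn = k*ℓ := by
        have h1 : (k-qn-i) + i + qn = k := by omega
        calc (k-qn-i)*ℓ + i*ℓ + ℓ*qn = ((k-qn-i) + i + qn)*ℓ := by ring
        _ = k*ℓ := by rw [h1]
      omega
    rw [harg, evalG_lucasB hξ hℓ hodd (k-qn-i) 0 (by omega)]
    simp only [Ne, Nat.cast_eq_zero]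
    omega
  have hCmem2 := smul_cancel_mem hCcoef hCmem
  have hfin : (⟨k*ℓ - (k-qn)*ℓ, by omega⟩ : Fin (k*ℓ+1)) = ⟨n, hn⟩ := by
    apply Fin.ext
    simp only [Fin.val_mk]
    omega
  rwa [hfin] at hCmem2

end Reach2


theorem weyl_module_simple_extension
    (ℓ k : ℕ) (hodd : Odd ℓ) (hℓ : 1 < ℓ) (hk : 0 < k)
    (h1 : 1 < k * ℓ + 1)                     -- (redundant: follows from hℓ, hk)
    (ξ : ℂ) (hξ : IsPrimitiveRoot ξ ℓ) :
    ∃ N : Submodule ℂ (WeylC (k * ℓ)),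
      IsUSubmodule ξ (k * ℓ) N ∧
      -- N contains the singular vector m_1 of weight kℓ - 2 …
      Finsupp.single (⟨1, h1⟩ : Fin (k * ℓ + 1)) (1 : ℂ) ∈ N ∧
      (∀ a : ℕ, 1 ≤ a →
        EdOp ξ (k * ℓ) a (Finsupp.single (⟨1, h1⟩ : Fin (k * ℓ + 1)) (1 : ℂ)) = 0) ∧
      -- … N is a simple submodule, so N ≅ L(kℓ - 2) …
      N ≠ ⊥ ∧
      (∀ N' ≤ N, IsUSubmodule ξ (k * ℓ) N' → N' = ⊥ ∨ N' = N) ∧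
      -- … and N is maximal with m_0 ∉ N, so W(kℓ)/N ≅ L(kℓ):
      (∀ N' : Submodule ℂ (WeylC (k * ℓ)), IsUSubmodule ξ (k * ℓ) N' → N < N' → N' = ⊤) ∧
      Finsupp.single (0 : Fin (k * ℓ + 1)) (1 : ℂ) ∉ N := by
  classical
  have hcomm : k*ℓ = ℓ*k := Nat.mul_comm _ _
  have hdvdμ : ℓ ∣ k*ℓ := ⟨k, hcomm⟩
  set S : Set (Fin (k*ℓ+1)) := {n | ¬ ℓ ∣ (n:ℕ)} with hSdef
  set N : Submodule ℂ (WeylC (k*ℓ)) := Finsupp.supported ℂ ℂ S with hNdef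
  have hm1S : (⟨1, h1⟩ : Fin (k*ℓ+1)) ∈ S := by
    simp only [hSdef, Set.mem_setOf_eq, Fin.val_mk]
    intro hd
    have := Nat.le_of_dvd one_pos hd
    omega
  have hsingle_mem : ∀ (j : Fin (k*ℓ+1)), j ∈ S → Finsupp.single j (1:ℂ) ∈ N := by
    intro j hj
    rw [hNdef, Finsupp.mem_supported']
    intro i hi
    rw [Finsupp.single_apply, if_neg]
    intro he
    exact hi (he ▸ hj)
  have hUN : IsUSubmodule ξ (k*ℓ) N := by
    intro a x hx
    rw [hNdef, Finsupp.mem_supported'] at hx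
    constructor
    · rw [hNdef, Finsupp.mem_supported']
      intro j hj
      have hdj : ℓ ∣ (j:ℕ) := by
        by_contra hd
        exact hj hd
      rw [EdOp_apply]
      split
      · rename_i h
        by_cases hxv : x ⟨(j:ℕ)+a, by omega⟩ = 0
        · rw [hxv, mul_zero]
        · have hmem : ¬ ℓ ∣ ((j:ℕ)+a) := by
            intro hdd
            apply hxv
            apply hx
            simp only [hSdef, Set.mem_setOf_eq, Fin.val_mk, not_not]
            exact hdd
          have hda : ¬ ℓ ∣ a := fun hda => hmem (Nat.dvd_add hdj hda)
          rw [evalG_lucasA hξ hℓ hodd (Nat.dvd_sub hdvdμ hdj) hda, zero_mul]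
      · rfl
    · rw [hNdef, Finsupp.mem_supported']
      intro j hj
      have hdj : ℓ ∣ (j:ℕ) := by
        by_contra hd
        exact hj hd
      rw [FdOp_apply]
      split
      · rename_i h
        by_cases hxv : x ⟨(j:ℕ)-a, by omega⟩ = 0
        · rw [hxv, mul_zero]
        · have hmem : ¬ ℓ ∣ ((j:ℕ)-a) := by
            intro hdd
            apply hxv
            apply hx
            simp only [hSdef, Set.mem_setOf_eq, Fin.val_mk, not_not]
            exact hdd
          have hda : ¬ ℓ ∣ a := fun hda => hmem (Nat.dvd_sub hdj hda)
          rw [evalG_lucasA hξ hℓ hodd hdj hda, zero_mul]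
      · rfl
  refine ⟨N, hUN, hsingle_mem _ hm1S, ?_, ?_, ?_, ?_, ?_⟩
  · -- singular vector
    intro a ha
    ext j
    rw [EdOp_apply]
    simp only [Finsupp.coe_zero, Pi.zero_apply]
    split
    · rename_i h
      rw [Finsupp.single_apply]
      by_cases he : (⟨1, h1⟩ : Fin (k*ℓ+1)) = ⟨(j:ℕ)+a, by omega⟩
      · have hv : 1 = (j:ℕ) + a := by
          have := congrArg Fin.val he
          simpa using this
        have harg : k*ℓ - (j:ℕ) = k*ℓ := by omega
        have ha1 : a = 1 := by omega
        rw [if_pos he, harg, ha1,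
          (evalG_one_eq_zero_iff hξ hℓ hodd _).mpr hdvdμ, zero_mul]
      · rw [if_neg he, mul_zero]
    · rfl
  · -- N ≠ ⊥
    rw [Submodule.ne_bot_iff]
    exact ⟨Finsupp.single (⟨1, h1⟩ : Fin (k*ℓ+1)) (1:ℂ), hsingle_mem _ hm1S,
      fun h => one_ne_zero (Finsupp.single_eq_zero.mp h)⟩
  · -- simplicity
    intro N' hle hU
    by_cases hbot : N' = ⊥
    · left; exact hbot
    · right
      obtain ⟨x, hxN', hx0⟩ := (Submodule.ne_bot_iff N').mp hbot
      have hxS : ∀ j : Fin (k*ℓ+1), x j ≠ 0 → ¬ ℓ ∣ (j:ℕ) := by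
        intro j hxj hdd
        have hxmem := hle hxN'
        rw [hNdef, Finsupp.mem_supported'] at hxmem
        exact hxj (hxmem j (by
          simp only [hSdef, Set.mem_setOf_eq, not_not]
          exact hdd))
      have htop := reach_top hodd hℓ hk hξ hU hxN' hx0 hxS
      have hall := gen_singles hodd hℓ hk hξ hU htop
      apply le_antisymm hle
      rw [hNdef, Finsupp.supported_eq_span_single, Submodule.span_le]
      rintro _ ⟨j, hjS, rfl⟩
      have hjd : ¬ ℓ ∣ (j:ℕ) := hjS
      have := hall (j:ℕ) j.isLt hjd
      simpa using this
  · -- maximality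
    intro N' hU hlt
    obtain ⟨x, hxN', hxnot⟩ := SetLike.exists_of_lt hlt
    set xS := x.filter (fun j : Fin (k*ℓ+1) => ¬ ℓ ∣ (j:ℕ)) with hxSdef
    have hxS_N : xS ∈ N := by
      rw [hNdef, Finsupp.mem_supported']
      intro j hj
      rw [hxSdef, Finsupp.filter_apply, if_neg]
      intro hd
      exact hd (by
        by_contra hdd
        exact hj hdd)
    have hx0mem : x - xS ∈ N' := sub_mem hxN' (hlt.le hxS_N)
    have hx0val : ∀ j : Fin (k*ℓ+1), (x - xS) j = if ℓ ∣ (j:ℕ) then x j else 0 := by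
      intro j
      rw [Finsupp.sub_apply, hxSdef, Finsupp.filter_apply]
      by_cases h : ℓ ∣ (j:ℕ)
      · rw [if_pos h, if_neg (not_not.mpr h), sub_zero]
      · rw [if_neg h, if_pos h, sub_self]
    have hxM : ∀ j : Fin (k*ℓ+1), (x - xS) j ≠ 0 → ℓ ∣ (j:ℕ) := by
      intro j h
      by_contra hd
      rw [hx0val j, if_neg hd] at h
      exact h rfl
    have hx0ne : x - xS ≠ 0 := by
      have hexists : ∃ j : Fin (k*ℓ+1), ℓ ∣ (j:ℕ) ∧ x j ≠ 0 := by
        by_contra hno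
        push_neg at hno
        apply hxnot
        rw [hNdef, Finsupp.mem_supported']
        intro j hj
        have hdj : ℓ ∣ (j:ℕ) := by
          by_contra hd
          exact hj hd
        exact hno j hdj
      obtain ⟨j, hdj, hxj⟩ := hexists
      intro h0
      have hv := hx0val j
      rw [h0, Finsupp.zero_apply, if_pos hdj] at hv
      exact hxj hv.symm
    have hall := reach_mult hodd hℓ hk hξ hU hx0mem hx0ne hxM
    rw [eq_top_iff]
    intro v _
    rw [← Finsupp.sum_single v]
    apply Submodule.sum_mem
    intro j _
    have hsm : Finsupp.single j (v j) = (v j) • Finsupp.single j (1:ℂ) := by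
      rw [Finsupp.smul_single, smul_eq_mul, mul_one]
    rw [hsm]
    apply N'.smul_mem
    by_cases hdj : ℓ ∣ (j:ℕ)
    · have := hall (j:ℕ) j.isLt hdj
      simpa using this
    · exact hlt.le (hsingle_mem j hdj)
  · -- m₀ ∉ N
    intro h
    rw [hNdef, Finsupp.mem_supported'] at h
    have h0 := h 0 (by
      simp only [hSdef, Set.mem_setOf_eq, not_not]
      exact ⟨0, by simp⟩)
    rw [Finsupp.single_apply, if_pos rfl] at h0
    exact one_ne_zero h0
end
end
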